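/- arXiv:2209.00119 — 7 statements merged into one kernel-verified Lean document; each statement's English description precedes it below -/
import Mathlib

section
/- Let G be a finite simple graph on vertex set {1,…,n} and I(G) ⊆ S its edge ideal. Let f = x_{i_1} + ⋯ + x_{i_r} be a sum of r distinct indeterminates of S, let B ⊆ S be a monomial ideal, and let A ⊆ S be a homogeneous ideal such that A ⊆ B, A : (f) = A, and I(G) = fB + A. Then B = I(G) + N_f. -/
open MvPolynomial

/-- The height of an ideal: the infimum of `Order.height P` over primes `P` containing it. -/
noncomputable def Ideal.ht {R : Type*} [CommRing R] (I : Ideal R) : ℕ∞ :=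
  ⨅ P : {P : PrimeSpectrum R // I ≤ P.asIdeal}, Order.height P.1

/-- The depth of a local ring: the supremum of lengths of regular sequences contained in the
maximal ideal. -/
noncomputable def IsLocalRing.depth (R : Type*) [CommRing R] [IsLocalRing R] : ℕ∞ :=
  ⨆ rs : {rs : List R // (∀ r ∈ rs, r ∈ IsLocalRing.maximalIdeal R) ∧
      RingTheory.Sequence.IsRegular R rs}, (rs.1.length : ℕ∞)

/-- A local ring is Cohen–Macaulay if its depth equals its Krull dimension. -/
def IsCohenMacaulayLocalRing (R : Type*) [CommRing R] [IsLocalRing R] : Prop :=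
  (IsLocalRing.depth R : WithBot ℕ∞) = ringKrullDim R

/-- A ring is Cohen–Macaulay if its localization at every maximal ideal is a
Cohen–Macaulay local ring. -/
def IsCohenMacaulayRing (R : Type*) [CommRing R] : Prop :=
  ∀ (m : Ideal R) [m.IsMaximal], IsCohenMacaulayLocalRing (Localization.AtPrime m)

/-- The edge ideal of a finite simple graph on vertex set `Fin n`. -/
noncomputable def edgeIdeal (k : Type*) [CommRing k] {n : ℕ} (G : SimpleGraph (Fin n)) :
    Ideal (MvPolynomial (Fin n) k) :=
  Ideal.span {p | ∃ i j, G.Adj i j ∧ p = X i * X j}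

/-- An ideal of a polynomial ring is homogeneous if it contains every homogeneous
component of each of its elements. -/
def IsHomogeneousIdeal {k : Type*} [CommRing k] {σ : Type*} (I : Ideal (MvPolynomial σ k)) :
    Prop :=
  ∀ f ∈ I, ∀ d : ℕ, MvPolynomial.homogeneousComponent d f ∈ I

/-- A monomial ideal is an ideal generated by (monic) monomials. -/
def IsMonomialIdeal {k : Type*} [CommRing k] {σ : Type*} (I : Ideal (MvPolynomial σ k)) :
    Prop :=
  ∃ s : Set (σ →₀ ℕ), I = Ideal.span ((fun d => monomial d (1 : k)) '' s)

/-- A squarefree monomial ideal is an ideal generated by squarefree (monic) monomials. -/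
def IsSquarefreeMonomialIdeal {k : Type*} [CommRing k] {n : ℕ}
    (I : Ideal (MvPolynomial (Fin n) k)) : Prop :=
  ∃ s : Set (Finset (Fin n)), I = Ideal.span ((fun F => ∏ i ∈ F, X i) '' s)

/-- For `f = ∑ i ∈ T, X i`, the ideal `N_f` generated by those variables `x_j` such that `j`
is adjacent in `G` to every vertex of `T`. -/
noncomputable def commonNeighborIdeal (k : Type*) [CommRing k] {n : ℕ} (G : SimpleGraph (Fin n))
    (T : Finset (Fin n)) : Ideal (MvPolynomial (Fin n) k) :=
  Ideal.span {p | ∃ j : Fin n, (∀ i ∈ T, G.Adj i j) ∧ p = X j}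


namespace Stmt0Aux

open Finsupp

variable {σ : Type*} {K : Type*} [CommSemiring K]


lemma degree_add' (u v : σ →₀ ℕ) : (u + v).degree = u.degree + v.degree := by
  simp [Finsupp.degree_eq_weight_one, map_add]

lemma eq_of_le_of_degree_le {u v : σ →₀ ℕ} (h : u ≤ v) (hd : v.degree ≤ u.degree) :
    u = v := by
  obtain ⟨c, rfl⟩ := le_iff_exists_add.mp h
  rw [degree_add'] at hd
  have : c.degree = 0 := by omega
  rw [(Finsupp.degree_eq_zero_iff c).mp this, add_zero]

lemma degree_one_single {e : σ →₀ ℕ} (h : e.degree = 1) :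
    ∃ j, e = Finsupp.single j 1 := by
  have hne : e ≠ 0 := by
    intro h0; rw [h0] at h; simp at h
  obtain ⟨j, hj⟩ := Finsupp.ne_iff.mp hne
  simp only [Finsupp.coe_zero, Pi.zero_apply] at hj
  refine ⟨j, ?_⟩
  have h1 : Finsupp.single j 1 ≤ e := by
    rw [Finsupp.single_le_iff]; omega
  refine (eq_of_le_of_degree_le h1 ?_).symm
  have : (Finsupp.single j 1 : σ →₀ ℕ).degree = 1 := by
    exact Finsupp.degree_single j 1
  omega

lemma pair_eq {a b i j : σ} (hab : a ≠ b)
    (h : Finsupp.single a 1 + Finsupp.single b 1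
        = Finsupp.single i 1 + Finsupp.single j 1) :
    (a = i ∧ b = j) ∨ (a = j ∧ b = i) := by
  classical
  by_cases hai : a = i
  · subst hai
    left
    refine ⟨rfl, ?_⟩
    have := add_left_cancel h
    exact Finsupp.single_left_inj one_ne_zero |>.mp this
  · right
    have ha := DFunLike.congr_fun h a
    have hba : b ≠ a := fun hh => hab hh.symm
    have hia : i ≠ a := fun hh => hai hh.symm
    simp [Finsupp.single_apply, hba, hia] at ha
    have hja : j = a := by
      by_contra hja
      simp [hja] at ha
    subst hja
    refine ⟨rfl, ?_⟩
    rw [add_comm (Finsupp.single i 1)] at h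
    have := add_left_cancel h
    exact Finsupp.single_left_inj one_ne_zero |>.mp this

lemma X_eq_monomial (i : σ) : (X i : MvPolynomial σ K) = monomial (Finsupp.single i 1) 1 :=
  rfl

lemma X_mul_X (i j : σ) :
    (X i * X j : MvPolynomial σ K)
      = monomial (Finsupp.single i 1 + Finsupp.single j 1) 1 := by
  rw [X_eq_monomial, X_eq_monomial, monomial_mul, one_mul]

lemma hcomp_mul {f : MvPolynomial σ K} (hf : f.IsHomogeneous 1)
    (g : MvPolynomial σ K) (d : ℕ) :
    homogeneousComponent (d + 1) (f * g) = f * homogeneousComponent d g := by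
  conv_lhs => rw [← sum_homogeneousComponent g, Finset.mul_sum, map_sum]
  have hterm : ∀ i ∈ Finset.range (g.totalDegree + 1),
      homogeneousComponent (d + 1) (f * homogeneousComponent i g)
        = if d = i then f * homogeneousComponent i g else 0 := by
    intro i _
    rw [homogeneousComponent_of_mem ((mem_homogeneousSubmodule _ _).mpr
      (hf.mul (homogeneousComponent_isHomogeneous i g)))]
    by_cases hdi : d = i
    · subst hdi; rw [if_pos (by omega), if_pos rfl]
    · rw [if_neg (by omega), if_neg hdi]
  rw [Finset.sum_congr rfl hterm, Finset.sum_ite_eq]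
  by_cases hd : d ∈ Finset.range (g.totalDegree + 1)
  · rw [if_pos hd]
  · rw [if_neg hd]
    have : homogeneousComponent d g = 0 := by
      apply homogeneousComponent_eq_zero
      simp only [Finset.mem_range] at hd
      omega
    rw [this, mul_zero]


lemma split_le {σ : Type*} {a b i : σ} {d : σ →₀ ℕ}
    (hle : Finsupp.single a 1 + Finsupp.single b 1 ≤ Finsupp.single i 1 + d) :
    (Finsupp.single a 1 + Finsupp.single b 1 ≤ d) ∨ (a = i ∧ Finsupp.single b 1 ≤ d)
      ∨ (b = i ∧ Finsupp.single a 1 ≤ d) := by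
  classical
  have h := fun v => Finsupp.le_def.mp hle v
  by_cases hai : a = i
  · subst hai
    right; left
    refine ⟨rfl, Finsupp.le_def.mpr fun v => ?_⟩
    have hv := h v
    simp only [Finsupp.coe_add, Pi.add_apply, Finsupp.single_apply] at hv ⊢
    split_ifs at hv ⊢ <;> omega
  · by_cases hbi : b = i
    · subst hbi
      right; right
      refine ⟨rfl, Finsupp.le_def.mpr fun v => ?_⟩
      have hv := h v
      simp only [Finsupp.coe_add, Pi.add_apply, Finsupp.single_apply] at hv ⊢
      split_ifs at hv ⊢ <;> omega
    · left
      refine Finsupp.le_def.mpr fun v => ?_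
      have hv := h v
      simp only [Finsupp.coe_add, Pi.add_apply, Finsupp.single_apply] at hv ⊢
      by_cases hiv : i = v
      · subst hiv
        rw [if_neg hai, if_neg hbi]
        omega
      · rw [if_neg hiv] at hv
        split_ifs at hv ⊢ <;> omega

end Stmt0Aux

/-- If the edge ideal `I(G)` satisfies `I(G) = fB + A` where
`f = x_{i₁} + ⋯ + x_{i_r}` is a sum of distinct indeterminates, `B` is a monomial ideal and
`A` is a homogeneous ideal with `A ⊆ B` and `A : (f) = A`, then `B = I(G) + N_f`. -/
theorem stmt0 {k : Type*} [Field k] {n : ℕ} (G : SimpleGraph (Fin n))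
    (T : Finset (Fin n)) (hT : T.Nonempty)
    (f : MvPolynomial (Fin n) k) (hf : f = ∑ i ∈ T, X i)
    (B A : Ideal (MvPolynomial (Fin n) k))
    (hBmon : IsMonomialIdeal B) (hAhom : IsHomogeneousIdeal A)
    (hAB : A ≤ B) (hcolon : A.colon (Ideal.span {f}) = A)
    (hlink : edgeIdeal k G = Ideal.span {f} * B + A) :
    B = edgeIdeal k G + commonNeighborIdeal k G T := by
  classical
  obtain ⟨sB, hB⟩ := hBmon
  have hX : ∀ j : Fin n, (X j : MvPolynomial (Fin n) k) = monomial (Finsupp.single j 1) 1 :=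
    fun j => rfl
  have hE : edgeIdeal k G = Ideal.span ((fun e => monomial e (1:k)) ''
      {e : Fin n →₀ ℕ | ∃ a b, G.Adj a b ∧ e = Finsupp.single a 1 + Finsupp.single b 1}) := by
    unfold edgeIdeal
    congr 1
    ext p
    constructor
    · rintro ⟨i, j, hij, rfl⟩
      exact ⟨Finsupp.single i 1 + Finsupp.single j 1, ⟨i, j, hij, rfl⟩,
        (Stmt0Aux.X_mul_X i j).symm⟩
    · rintro ⟨e, ⟨i, j, hij, rfl⟩, rfl⟩
      exact ⟨i, j, hij, (Stmt0Aux.X_mul_X i j).symm⟩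
  have mem_edge : ∀ p : MvPolynomial (Fin n) k, p ∈ edgeIdeal k G ↔
      ∀ e ∈ p.support, ∃ a b, G.Adj a b ∧ Finsupp.single a 1 + Finsupp.single b 1 ≤ e := by
    intro p
    rw [hE, mem_ideal_span_monomial_image]
    constructor
    · intro h e he
      obtain ⟨s, ⟨a, b, hab, rfl⟩, hle⟩ := h e he
      exact ⟨a, b, hab, hle⟩
    · intro h e he
      obtain ⟨a, b, hab, hle⟩ := h e he
      exact ⟨_, ⟨a, b, hab, rfl⟩, hle⟩
  have mem_B : ∀ p : MvPolynomial (Fin n) k, p ∈ B ↔ ∀ e ∈ p.support, ∃ s ∈ sB, s ≤ e := by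
    intro p; rw [hB, mem_ideal_span_monomial_image]
  have hNid : commonNeighborIdeal k G T
      = Ideal.span (X '' {j : Fin n | ∀ i ∈ T, G.Adj i j}) := by
    unfold commonNeighborIdeal
    congr 1
    ext p
    constructor
    · rintro ⟨j, hj, rfl⟩; exact ⟨j, hj, rfl⟩
    · rintro ⟨j, hj, rfl⟩; exact ⟨j, hj, rfl⟩
  have hfhom : f.IsHomogeneous 1 := by
    rw [hf]; exact IsHomogeneous.sum _ _ _ (fun i _ => isHomogeneous_X _ i)
  have hcoef : ∀ (d : Fin n →₀ ℕ) (i : Fin n), i ∈ T →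
      coeff (Finsupp.single i 1 + d) (f * monomial d (1:k)) = 1 := by
    intro d i hi
    have hmono : ∀ i' : Fin n, (X i' : MvPolynomial (Fin n) k) * monomial d 1
        = monomial (Finsupp.single i' 1 + d) 1 := by
      intro i'; rw [hX, monomial_mul, one_mul]
    rw [hf, Finset.sum_mul]
    simp_rw [hmono]
    rw [coeff_sum]
    simp_rw [coeff_monomial]
    have h2 : ∀ i' ∈ T,
        (if Finsupp.single i' 1 + d = Finsupp.single i 1 + d then (1:k) else 0)
          = if i' = i then 1 else 0 := by
      intro i' _
      by_cases h : i' = i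
      · subst h; simp
      · rw [if_neg h, if_neg (fun hc => h
          ((Finsupp.single_left_inj one_ne_zero).mp (add_right_cancel hc)))]
    rw [Finset.sum_congr rfl h2, Finset.sum_ite_eq' T i, if_pos hi]
  have hEdgeB : edgeIdeal k G ≤ B := by
    rw [hlink, Submodule.add_eq_sup]
    exact sup_le Ideal.mul_le_right hAB
  have hAE : A ≤ edgeIdeal k G := by
    rw [hlink, Submodule.add_eq_sup]; exact le_sup_right
  have hfBE : Ideal.span {f} * B ≤ edgeIdeal k G := by
    rw [hlink, Submodule.add_eq_sup]; exact le_sup_left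
  have hdeg1 : ∀ v : Fin n, (Finsupp.single v 1 : Fin n →₀ ℕ).degree = 1 := by
    intro v; exact Finsupp.degree_single v 1
  -- variables in B are common neighbors of T
  have L1 : ∀ j : Fin n, (X j : MvPolynomial (Fin n) k) ∈ B → ∀ i ∈ T, G.Adj i j := by
    intro j hj i hi
    have hfX : f * X j ∈ edgeIdeal k G :=
      hfBE (Ideal.mul_mem_mul (Ideal.mem_span_singleton_self f) hj)
    have hsup : Finsupp.single i 1 + Finsupp.single j 1 ∈ (f * X j).support := by
      rw [mem_support_iff, hX j, hcoef _ i hi]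
      exact one_ne_zero
    obtain ⟨a, b, hab, hle⟩ := (mem_edge _).mp hfX _ hsup
    have heq : Finsupp.single a 1 + Finsupp.single b 1
        = Finsupp.single i 1 + Finsupp.single j 1 := by
      apply Stmt0Aux.eq_of_le_of_degree_le hle
      rw [Stmt0Aux.degree_add', Stmt0Aux.degree_add', hdeg1, hdeg1, hdeg1, hdeg1]
    rcases Stmt0Aux.pair_eq (G.ne_of_adj hab) heq with ⟨h1, h2⟩ | ⟨h1, h2⟩
    · subst h1; subst h2; exact hab
    · subst h1; subst h2; exact hab.symm
  -- monomials of elements of B are in B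
  have L2 : ∀ (p : MvPolynomial (Fin n) k) (e : Fin n →₀ ℕ), p ∈ B → e ∈ p.support →
      (monomial e (1:k)) ∈ B := by
    intro p e hp he
    rw [mem_B] at hp ⊢
    intro e' he'
    rw [support_monomial, if_neg one_ne_zero, Finset.mem_singleton] at he'
    subst he'
    exact hp _ he
  -- key lemma: every edge monomial is f * u + (element of A) with u in N_f
  have key : ∀ a b : Fin n, G.Adj a b → ∃ u, u ∈ commonNeighborIdeal k G T ∧
      X a * X b - f * u ∈ A := by
    intro a b hab
    have hedge : (X a * X b : MvPolynomial (Fin n) k) ∈ edgeIdeal k G :=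
      Ideal.subset_span ⟨a, b, hab, rfl⟩
    rw [hlink, Submodule.add_eq_sup, Submodule.mem_sup] at hedge
    obtain ⟨p, hp, q, hq, hpq⟩ := hedge
    rw [Ideal.mem_span_singleton_mul] at hp
    obtain ⟨g, hg, rfl⟩ := hp
    have h2 := congrArg (homogeneousComponent 2) hpq
    rw [map_add] at h2
    have hXX : homogeneousComponent 2 (X a * X b : MvPolynomial (Fin n) k) = X a * X b := by
      rw [homogeneousComponent_of_mem ((mem_homogeneousSubmodule _ _).mpr
        ((isHomogeneous_X _ a).mul (isHomogeneous_X _ b))), if_pos rfl]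
    have hfg2 : homogeneousComponent 2 (f * g) = f * homogeneousComponent 1 g := by
      simpa using Stmt0Aux.hcomp_mul hfhom g 1
    rw [hXX, hfg2] at h2
    refine ⟨homogeneousComponent 1 g, ?_, ?_⟩
    · rw [hNid, mem_ideal_span_X_image]
      intro e he
      have hce : coeff e (homogeneousComponent 1 g) ≠ 0 := mem_support_iff.mp he
      rw [coeff_homogeneousComponent] at hce
      by_cases hdeg : e.degree = 1
      swap
      · rw [if_neg hdeg] at hce; exact absurd rfl hce
      rw [if_pos hdeg] at hce
      obtain ⟨j, rfl⟩ := Stmt0Aux.degree_one_single hdeg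
      have hXjB : (X j : MvPolynomial (Fin n) k) ∈ B := by
        rw [hX]
        exact L2 g _ hg (mem_support_iff.mpr hce)
      exact ⟨j, L1 j hXjB, by simp⟩
    · have hsub : X a * X b - f * homogeneousComponent 1 g = homogeneousComponent 2 q := by
        rw [← h2, add_sub_cancel_left]
      rw [hsub]
      exact hAhom q hq 2
  -- N_f ≤ B
  have hNB : commonNeighborIdeal k G T ≤ B := by
    refine Ideal.span_le.mpr ?_
    rintro p ⟨j, hjN, rfl⟩
    have hfX : f * X j ∈ edgeIdeal k G := by
      rw [hf, Finset.sum_mul]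
      exact Ideal.sum_mem _ (fun i hi => Ideal.subset_span ⟨i, j, hjN i hi, rfl⟩)
    rw [hlink, Submodule.add_eq_sup, Submodule.mem_sup] at hfX
    obtain ⟨p, hp, q, hq, hpq⟩ := hfX
    rw [Ideal.mem_span_singleton_mul] at hp
    obtain ⟨g, hg, rfl⟩ := hp
    have hcol : X j - g ∈ A := by
      rw [← hcolon, Ideal.mem_colon_span_singleton]
      have hqe : (X j - g) * f = q := by linear_combination -hpq
      rw [hqe]
      exact hq
    have hXj : (X j : MvPolynomial (Fin n) k) = (X j - g) + g := by ring
    rw [hXj]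
    exact B.add_mem (hAB hcol) hg
  refine le_antisymm ?_ (by rw [Submodule.add_eq_sup]; exact sup_le hEdgeB hNB)
  rw [hB]
  refine Ideal.span_le.mpr ?_
  rintro p ⟨d, hd, rfl⟩
  show monomial d (1:k) ∈ edgeIdeal k G + commonNeighborIdeal k G T
  have hmB : (monomial d (1:k)) ∈ B := by rw [hB]; exact Ideal.subset_span ⟨d, hd, rfl⟩
  by_cases hcase : ∃ a b, G.Adj a b ∧ Finsupp.single a 1 + Finsupp.single b 1 ≤ d
  · have hmE : (monomial d (1:k)) ∈ edgeIdeal k G := by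
      rw [mem_edge]
      intro e he
      rw [support_monomial, if_neg one_ne_zero, Finset.mem_singleton] at he
      subst he
      exact hcase
    rw [Submodule.add_eq_sup]
    exact Submodule.mem_sup_left hmE
  · push_neg at hcase
    have hstep : ∀ i : Fin n, ∃ jj : Fin n, i ∈ T →
        G.Adj i jj ∧ Finsupp.single jj 1 ≤ d := by
      intro i
      by_cases hi : i ∈ T
      swap
      · exact ⟨i, fun h => absurd h hi⟩
      · have hfm : f * monomial d (1:k) ∈ edgeIdeal k G :=
          hfBE (Ideal.mul_mem_mul (Ideal.mem_span_singleton_self f) hmB)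
        have hsup : Finsupp.single i 1 + d ∈ (f * monomial d (1:k)).support := by
          rw [mem_support_iff, hcoef d i hi]
          exact one_ne_zero
        obtain ⟨a, b, hab, hle⟩ := (mem_edge _).mp hfm _ hsup
        rcases Stmt0Aux.split_le hle with h | ⟨h1, h2⟩ | ⟨h1, h2⟩
        · exact absurd h (hcase a b hab)
        · subst h1; exact ⟨b, fun _ => ⟨hab, h2⟩⟩
        · subst h1; exact ⟨a, fun _ => ⟨hab.symm, h2⟩⟩
    choose jf hjf using hstep
    have hkey : ∀ i : Fin n, ∃ u, i ∈ T → (u ∈ commonNeighborIdeal k G T ∧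
        X i * X (jf i) - f * u ∈ A) := by
      intro i
      by_cases hi : i ∈ T
      · obtain ⟨u, hu1, hu2⟩ := key i (jf i) (hjf i hi).1
        exact ⟨u, fun _ => ⟨hu1, hu2⟩⟩
      · exact ⟨0, fun h => absurd h hi⟩
    choose uf huf using hkey
    have hfm : f * monomial d (1:k)
        = ∑ i ∈ T, (X i * X (jf i)) * monomial (d - Finsupp.single (jf i) 1) (1:k) := by
      rw [hf, Finset.sum_mul]
      refine Finset.sum_congr rfl fun i hi => ?_
      simp only [Stmt0Aux.X_mul_X, hX, monomial_mul, one_mul]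
      congr 1
      rw [add_assoc, add_tsub_cancel_of_le (hjf i hi).2]
    set U : MvPolynomial (Fin n) k
      := ∑ i ∈ T, uf i * monomial (d - Finsupp.single (jf i) 1) 1 with hU
    have hUN : U ∈ commonNeighborIdeal k G T :=
      Ideal.sum_mem _ (fun i hi => Ideal.mul_mem_right _ _ (huf i hi).1)
    have hqA : f * (monomial d (1:k) - U) ∈ A := by
      have hexp : f * (monomial d (1:k) - U)
          = ∑ i ∈ T, (X i * X (jf i) - f * uf i)
              * monomial (d - Finsupp.single (jf i) 1) 1 := by
        rw [mul_sub, hfm, hU, Finset.mul_sum, ← Finset.sum_sub_distrib]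
        refine Finset.sum_congr rfl fun i hi => ?_
        ring
      rw [hexp]
      exact Ideal.sum_mem _ fun i hi => Ideal.mul_mem_right _ _ (huf i hi).2
    have hmA : monomial d (1:k) - U ∈ A := by
      rw [← hcolon, Ideal.mem_colon_span_singleton, mul_comm]
      exact hqA
    have hdecomp : monomial d (1:k) = (monomial d 1 - U) + U := by ring
    rw [hdecomp, Submodule.add_eq_sup]
    exact Submodule.add_mem _ (Submodule.mem_sup_left (hAE hmA)) (Submodule.mem_sup_right hUN)
end

section
/- Let G be a finite simple graph on vertex set {1,…,n} and I(G) ⊆ S its edge ideal. Let f = x_{i_1} + ⋯ + x_{i_r} be a sum of r distinct indeterminates of S, let B ⊆ S be a monomial ideal, and let A ⊆ S be a homogeneous ideal such that A ⊆ B, A : (f) = A, and I(G) = fB + A. Then for every i ∈ {1,…,n}, the variable x_i is an element of B if and only if {i_q, i} is an edge of G for every q ∈ {1,…,r} (that is, if and only if x_i ∈ N_f). -/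
open MvPolynomial

/-- With hypotheses as in the paper's Theorem 3.5, a variable `x_i` lies in `B`
if and only if `i` is adjacent in `G` to every one of `i₁, …, i_r` (i.e. `x_i ∈ N_f`). -/
theorem stmt2 {k : Type*} [Field k] {n : ℕ} (G : SimpleGraph (Fin n))
    (T : Finset (Fin n)) (hT : T.Nonempty)
    (f : MvPolynomial (Fin n) k) (hf : f = ∑ i ∈ T, X i)
    (B A : Ideal (MvPolynomial (Fin n) k))
    (hBmon : IsMonomialIdeal B) (hAhom : IsHomogeneousIdeal A)
    (hAB : A ≤ B) (hcolon : A.colon (Ideal.span {f}) = A)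
    (hlink : edgeIdeal k G = Ideal.span {f} * B + A) :
    ∀ i : Fin n, X i ∈ B ↔ ∀ q ∈ T, G.Adj q i := by
  classical
  -- monomial description of the edge ideal
  have hXX : ∀ a b : Fin n, (X a * X b : MvPolynomial (Fin n) k)
      = monomial (Finsupp.single a 1 + Finsupp.single b 1) 1 := by
    intro a b
    rw [MvPolynomial.X, MvPolynomial.X, MvPolynomial.monomial_mul, one_mul]
  have hedge : edgeIdeal k G = Ideal.span ((fun d => monomial d (1 : k)) ''
      {d | ∃ a b, G.Adj a b ∧ d = Finsupp.single a 1 + Finsupp.single b 1}) := by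
    unfold edgeIdeal
    congr 1
    ext p
    constructor
    · rintro ⟨a, b, hab, rfl⟩
      exact ⟨_, ⟨a, b, hab, rfl⟩, (hXX a b).symm⟩
    · rintro ⟨d, ⟨a, b, hab, rfl⟩, rfl⟩
      exact ⟨a, b, hab, (hXX a b).symm⟩
  intro i
  have hfX : f * X i = ∑ q ∈ T, monomial (Finsupp.single q 1 + Finsupp.single i 1) (1 : k) := by
    rw [hf, Finset.sum_mul]
    exact Finset.sum_congr rfl fun q _ => hXX q i
  constructor
  · -- X i ∈ B → adjacency
    intro hXi q hq
    have hmem : f * X i ∈ edgeIdeal k G := by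
      rw [hlink]
      exact Submodule.mem_sup_left (Ideal.mem_span_singleton_mul.mpr ⟨X i, hXi, rfl⟩)
    rw [hedge, MvPolynomial.mem_ideal_span_monomial_image] at hmem
    have hsupp : (Finsupp.single q 1 + Finsupp.single i 1) ∈ (f * X i).support := by
      rw [MvPolynomial.mem_support_iff, hfX, MvPolynomial.coeff_sum]
      have : ∀ q' ∈ T, coeff (Finsupp.single q 1 + Finsupp.single i 1)
          (monomial (Finsupp.single q' 1 + Finsupp.single i 1) (1 : k))
          = if q' = q then 1 else 0 := by
        intro q' _
        rw [MvPolynomial.coeff_monomial]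
        congr 1
        simp only [eq_iff_iff]
        constructor
        · intro h
          have := add_right_cancel h
          exact (Finsupp.single_left_injective one_ne_zero) this
        · rintro rfl; rfl
      rw [Finset.sum_congr rfl this, Finset.sum_ite_eq' T q (fun _ => (1:k)), if_pos hq]
      exact one_ne_zero
    obtain ⟨e, ⟨a, b, hab, rfl⟩, hle⟩ := hmem _ hsupp
    have hval : ∀ c : Fin n, c = a ∨ c = b → c = q ∨ c = i := by
      intro c hc
      by_contra hcon
      push_neg at hcon
      have h1 : (Finsupp.single a 1 + Finsupp.single b 1 : Fin n →₀ ℕ) c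
          ≤ (Finsupp.single q 1 + Finsupp.single i 1 : Fin n →₀ ℕ) c := hle c
      have h2 : (Finsupp.single q 1 + Finsupp.single i 1 : Fin n →₀ ℕ) c = 0 := by
        simp [Finsupp.single_apply, (Ne.symm hcon.1), (Ne.symm hcon.2)]
      have h3 : (1 : ℕ) ≤ (Finsupp.single a 1 + Finsupp.single b 1 : Fin n →₀ ℕ) c := by
        rcases hc with rfl | rfl
        · simp [Finsupp.single_apply]
        · simp [Finsupp.single_apply]
      omega
    have hne : a ≠ b := hab.ne
    rcases hval a (Or.inl rfl) with rfl | rfl <;> rcases hval b (Or.inr rfl) with rfl | rfl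
    · exact absurd rfl hne
    · exact hab
    · exact hab.symm
    · exact absurd rfl hne
  · -- adjacency → X i ∈ B
    intro hadj
    have hmem : f * X i ∈ edgeIdeal k G := by
      rw [hfX]
      refine Ideal.sum_mem _ fun q hq => ?_
      rw [← hXX q i]
      exact Ideal.subset_span ⟨q, i, hadj q hq, rfl⟩
    rw [hlink] at hmem
    obtain ⟨c, hc, a, ha, hca⟩ := Submodule.mem_sup.mp hmem
    obtain ⟨b, hb, rfl⟩ := Ideal.mem_span_singleton_mul.mp hc
    have hXib : X i - b ∈ A := by
      rw [← hcolon, Ideal.mem_colon_span_singleton]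
      have : (X i - b) * f = a := by linear_combination -hca
      rw [this]; exact ha
    have : X i = (X i - b) + b := by ring
    rw [this]
    exact Ideal.add_mem _ (hAB hXib) hb
end

section
/- Let G be a finite simple graph on vertex set {1,…,n} and I(G) ⊆ S its edge ideal. Let f = x_{i_1} + ⋯ + x_{i_r} be a sum of r distinct indeterminates of S, let B ⊆ S be a monomial ideal, and let A ⊆ S be a homogeneous ideal such that A ⊆ B, A : (f) = A, ht(A) + 1 = ht(I(G)), and I(G) = fB + A. Then G has a vertex of degree at least r; in fact there is a vertex j adjacent in G to every one of i_1,…,i_r. -/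
open MvPolynomial

/-! ### Auxiliary machinery -/

section AuxChain

/-- A (crude) bound for lengths of chains of primes in `k[x₁, …, xₙ]`. -/
private def chainBound : ℕ → ℕ
  | 0 => 0
  | n + 1 => 2 * chainBound n + 1

private lemma ltSeries_le_of_ringEquiv {R S : Type*} [CommRing R] [CommRing S]
    (e : R ≃+* S) {c : ℕ}
    (h : ∀ q : LTSeries (PrimeSpectrum S), q.length ≤ c)
    (p : LTSeries (PrimeSpectrum R)) : p.length ≤ c := by
  have hcomp : ∀ I : Ideal R, (I.comap e.symm.toRingHom).comap e.toRingHom = I := by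
    intro I
    rw [Ideal.comap_comap]
    have heq : (e.symm.toRingHom).comp e.toRingHom = RingHom.id R := by
      ext x; simp
    rw [heq, Ideal.comap_id]
  have hstrict : StrictMono (fun Q : PrimeSpectrum R =>
      (⟨Q.asIdeal.comap e.symm.toRingHom, inferInstance⟩ : PrimeSpectrum S)) := by
    intro Q Q' hQQ
    rw [← PrimeSpectrum.asIdeal_lt_asIdeal]
    show Q.asIdeal.comap e.symm.toRingHom < Q'.asIdeal.comap e.symm.toRingHom
    refine lt_of_le_of_ne
      (Ideal.comap_mono ((PrimeSpectrum.asIdeal_le_asIdeal _ _).2 hQQ.le)) fun hc => ?_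
    have hQQ' : Q.asIdeal = Q'.asIdeal := by
      rw [← hcomp Q.asIdeal, ← hcomp Q'.asIdeal, hc]
    exact hQQ.ne (PrimeSpectrum.ext hQQ')
  exact h (p.map _ hstrict)

private lemma field_ltSeries {K : Type*} [Field K] (p : LTSeries (PrimeSpectrum K)) :
    p.length ≤ 0 := by
  by_contra hcon
  push_neg at hcon
  have h01 : p ⟨0, by omega⟩ < p ⟨1, by omega⟩ :=
    p.strictMono (show (⟨0, by omega⟩ : Fin (p.length + 1)) < ⟨1, by omega⟩ by
      rw [Fin.mk_lt_mk]; omega)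
  have e0 : (p ⟨0, by omega⟩).asIdeal = ⊥ := (p ⟨0, by omega⟩).asIdeal.eq_bot_of_prime
  have e1 : (p ⟨1, by omega⟩).asIdeal = ⊥ := (p ⟨1, by omega⟩).asIdeal.eq_bot_of_prime
  exact h01.ne (PrimeSpectrum.ext (e0.trans e1.symm))

private lemma no_three_primes {R S : Type*} [CommRing R] [CommRing S] [IsDomain S]
    [IsPrincipalIdealRing S] (e : R ≃+* S) {I1 I2 I3 : Ideal R}
    (hp2 : I2.IsPrime) (hp3 : I3.IsPrime)
    (h12 : I1 < I2) (h23 : I2 < I3) : False := by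
  have hcomp : ∀ I : Ideal R, (I.comap e.symm.toRingHom).comap e.toRingHom = I := by
    intro I
    rw [Ideal.comap_comap]
    have heq : (e.symm.toRingHom).comp e.toRingHom = RingHom.id R := by
      ext x; simp
    rw [heq, Ideal.comap_id]
  haveI := hp2; haveI := hp3
  haveI J2prime : (I2.comap e.symm.toRingHom).IsPrime := Ideal.comap_isPrime _ _
  haveI J3prime : (I3.comap e.symm.toRingHom).IsPrime := Ideal.comap_isPrime _ _
  have hJlt : ∀ {Ia Ib : Ideal R}, Ia < Ib →
      Ia.comap e.symm.toRingHom < Ib.comap e.symm.toRingHom := by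
    intro Ia Ib h
    refine lt_of_le_of_ne (Ideal.comap_mono h.le) fun hc => h.ne ?_
    rw [← hcomp Ia, ← hcomp Ib, hc]
  have h12' := hJlt h12
  have h23' := hJlt h23
  have hne : I2.comap e.symm.toRingHom ≠ ⊥ := by
    intro hbot
    rw [hbot] at h12'
    exact not_lt_bot h12'
  have hmax := IsPrime.to_maximal_ideal hne
  exact h23'.ne (hmax.eq_of_le J3prime.ne_top h23'.le)

attribute [local instance] MvPolynomial.algebraMvPolynomial

private lemma fiber_three {R : Type*} [CommRing R]
    {q1 q2 q3 : PrimeSpectrum (MvPolynomial (Fin 1) R)}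
    (h12 : q1 < q2) (h23 : q2 < q3)
    (h13 : q1.asIdeal.comap (C : R →+* MvPolynomial (Fin 1) R)
        = q3.asIdeal.comap (C : R →+* MvPolynomial (Fin 1) R)) : False := by
  classical
  set p : Ideal R := q1.asIdeal.comap (C : R →+* MvPolynomial (Fin 1) R) with hpdef
  haveI hpp : p.IsPrime := Ideal.comap_isPrime _ _
  have hle12 : q1.asIdeal ≤ q2.asIdeal := (PrimeSpectrum.asIdeal_le_asIdeal _ _).2 h12.le
  have hle23 : q2.asIdeal ≤ q3.asIdeal := (PrimeSpectrum.asIdeal_le_asIdeal _ _).2 h23.le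
  have hp1 : q1.asIdeal.comap (C : R →+* MvPolynomial (Fin 1) R) = p := rfl
  have hp3 : q3.asIdeal.comap (C : R →+* MvPolynomial (Fin 1) R) = p := h13.symm
  have hp2 : q2.asIdeal.comap (C : R →+* MvPolynomial (Fin 1) R) = p :=
    le_antisymm (hp3 ▸ Ideal.comap_mono hle23) (Ideal.comap_mono hle12)
  let A := R ⧸ p
  let Φ : MvPolynomial (Fin 1) R →+* MvPolynomial (Fin 1) A :=
    MvPolynomial.map (Ideal.Quotient.mk p)
  have hsurj : Function.Surjective Φ :=
    MvPolynomial.map_surjective _ Ideal.Quotient.mk_surjective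
  have hker : ∀ {q : PrimeSpectrum (MvPolynomial (Fin 1) R)},
      q.asIdeal.comap (C : R →+* MvPolynomial (Fin 1) R) = p →
        RingHom.ker Φ ≤ q.asIdeal := by
    intro q hq g hg
    rw [RingHom.mem_ker] at hg
    have hcoeff : ∀ d, coeff d g ∈ p := by
      intro d
      have h1 : coeff d (MvPolynomial.map (Ideal.Quotient.mk p) g)
          = Ideal.Quotient.mk p (coeff d g) := MvPolynomial.coeff_map _ _ _
      rw [show MvPolynomial.map (Ideal.Quotient.mk p) g = (0 : MvPolynomial (Fin 1) A) from hg,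
        coeff_zero] at h1
      exact Ideal.Quotient.eq_zero_iff_mem.1 h1.symm
    have hmem : ∀ d ∈ g.support, monomial d (coeff d g) ∈ q.asIdeal := by
      intro d _
      have hc : (C (coeff d g) : MvPolynomial (Fin 1) R) ∈ q.asIdeal := by
        have := hcoeff d
        rw [← hq] at this
        exact this
      have hmono : monomial d (coeff d g) = C (coeff d g) * monomial d 1 := by
        rw [C_mul_monomial, mul_one]
      rw [hmono]
      exact Ideal.mul_mem_right _ _ hc
    have := Ideal.sum_mem q.asIdeal hmem
    rwa [support_sum_monomial_coeff] at this
  have hcm : ∀ {q : PrimeSpectrum (MvPolynomial (Fin 1) R)},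
      q.asIdeal.comap (C : R →+* MvPolynomial (Fin 1) R) = p →
        (q.asIdeal.map Φ).comap Φ = q.asIdeal := by
    intro q hq
    rw [Ideal.comap_map_of_surjective Φ hsurj]
    exact sup_eq_left.2 (hker hq)
  haveI hP1 : (q1.asIdeal.map Φ).IsPrime := Ideal.map_isPrime_of_surjective hsurj (hker hp1)
  haveI hP2 : (q2.asIdeal.map Φ).IsPrime := Ideal.map_isPrime_of_surjective hsurj (hker hp2)
  haveI hP3 : (q3.asIdeal.map Φ).IsPrime := Ideal.map_isPrime_of_surjective hsurj (hker hp3)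
  have hmaplt : ∀ {qa qb : PrimeSpectrum (MvPolynomial (Fin 1) R)},
      qa.asIdeal.comap (C : R →+* MvPolynomial (Fin 1) R) = p →
      qb.asIdeal.comap (C : R →+* MvPolynomial (Fin 1) R) = p →
      qa < qb → qa.asIdeal.map Φ < qb.asIdeal.map Φ := by
    intro qa qb hqa hqb hab
    refine lt_of_le_of_ne
      (Ideal.map_mono ((PrimeSpectrum.asIdeal_le_asIdeal _ _).2 hab.le)) fun hc => ?_
    have := congrArg (Ideal.comap Φ) hc
    rw [hcm hqa, hcm hqb] at this
    exact ((PrimeSpectrum.asIdeal_lt_asIdeal _ _).2 hab).ne this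
  have hlt12 : q1.asIdeal.map Φ < q2.asIdeal.map Φ := hmaplt hp1 hp2 h12
  have hlt23 : q2.asIdeal.map Φ < q3.asIdeal.map Φ := hmaplt hp2 hp3 h23
  have hbot : ∀ {q : PrimeSpectrum (MvPolynomial (Fin 1) R)},
      q.asIdeal.comap (C : R →+* MvPolynomial (Fin 1) R) = p →
        (q.asIdeal.map Φ).comap (C : A →+* MvPolynomial (Fin 1) A) = ⊥ := by
    intro q hq
    refine le_antisymm ?_ bot_le
    intro a ha
    obtain ⟨r, rfl⟩ := Ideal.Quotient.mk_surjective a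
    rw [Ideal.mem_comap] at ha
    have hCr : (C r : MvPolynomial (Fin 1) R) ∈ (q.asIdeal.map Φ).comap Φ := by
      rw [Ideal.mem_comap]
      rw [show Φ (C r) = C (Ideal.Quotient.mk p r) from MvPolynomial.map_C _ _]
      exact ha
    rw [hcm hq] at hCr
    have hrp : r ∈ p := by
      rw [← hq]
      exact Ideal.mem_comap.2 hCr
    rw [Ideal.mem_bot]
    exact Ideal.Quotient.eq_zero_iff_mem.2 hrp
  let K := FractionRing A
  set M : Submonoid (MvPolynomial (Fin 1) A) :=
    (nonZeroDivisors A).map (C : A →+* MvPolynomial (Fin 1) A) with hMdef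
  haveI : IsLocalization M (MvPolynomial (Fin 1) K) := MvPolynomial.isLocalization _ _
  have hdisj : ∀ {q : PrimeSpectrum (MvPolynomial (Fin 1) R)},
      q.asIdeal.comap (C : R →+* MvPolynomial (Fin 1) R) = p →
        Disjoint (M : Set (MvPolynomial (Fin 1) A)) (q.asIdeal.map Φ : Set _) := by
    intro q hq
    rw [Set.disjoint_left]
    rintro x ⟨a, haM, rfl⟩ hxq
    have hmem : a ∈ (q.asIdeal.map Φ).comap (C : A →+* MvPolynomial (Fin 1) A) :=
      Ideal.mem_comap.2 hxq
    rw [hbot hq, Ideal.mem_bot] at hmem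
    exact mem_nonZeroDivisors_iff_ne_zero.1 haM hmem
  let oi := IsLocalization.orderIsoOfPrime M (MvPolynomial (Fin 1) K)
  let b1 : {pp : Ideal (MvPolynomial (Fin 1) A) //
      pp.IsPrime ∧ Disjoint (M : Set (MvPolynomial (Fin 1) A)) ↑pp} :=
    ⟨q1.asIdeal.map Φ, hP1, hdisj hp1⟩
  let b2 : {pp : Ideal (MvPolynomial (Fin 1) A) //
      pp.IsPrime ∧ Disjoint (M : Set (MvPolynomial (Fin 1) A)) ↑pp} :=
    ⟨q2.asIdeal.map Φ, hP2, hdisj hp2⟩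
  let b3 : {pp : Ideal (MvPolynomial (Fin 1) A) //
      pp.IsPrime ∧ Disjoint (M : Set (MvPolynomial (Fin 1) A)) ↑pp} :=
    ⟨q3.asIdeal.map Φ, hP3, hdisj hp3⟩
  have hb12 : oi.symm b1 < oi.symm b2 := oi.symm.strictMono (Subtype.mk_lt_mk.2 hlt12)
  have hb23 : oi.symm b2 < oi.symm b3 := oi.symm.strictMono (Subtype.mk_lt_mk.2 hlt23)
  have e : MvPolynomial (Fin 1) K ≃+* Polynomial K :=
    ((renameEquiv K (Equiv.equivPUnit.{1, 1} (Fin 1))).trans (pUnitAlgEquiv K)).toRingEquiv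
  exact no_three_primes e (oi.symm b2).2 (oi.symm b3).2
    (Subtype.coe_lt_coe.2 hb12) (Subtype.coe_lt_coe.2 hb23)

private lemma step_ltSeries {R : Type*} [CommRing R] {c : ℕ}
    (hR : ∀ q : LTSeries (PrimeSpectrum R), q.length ≤ c)
    (p : LTSeries (PrimeSpectrum (MvPolynomial (Fin 1) R))) : p.length ≤ 2 * c + 1 := by
  classical
  have hdiv : p.length / 2 ≤ c := by
    refine hR ⟨p.length / 2, fun i =>
      ⟨(p ⟨2 * i.1, by have := i.isLt; omega⟩).asIdeal.comap
        (C : R →+* MvPolynomial (Fin 1) R), inferInstance⟩, ?_⟩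
    intro i
    have hilt := i.isLt
    show (_ : PrimeSpectrum R) < _
    rw [← PrimeSpectrum.asIdeal_lt_asIdeal]
    show (p ⟨2 * i.1, by omega⟩).asIdeal.comap (C : R →+* MvPolynomial (Fin 1) R)
        < (p ⟨2 * (i.1 + 1), by omega⟩).asIdeal.comap (C : R →+* MvPolynomial (Fin 1) R)
    have hpe : p.toFun ⟨2 * (i.1 + 1), by omega⟩ = p.toFun ⟨2 * i.1 + 2, by omega⟩ :=
      congrArg p.toFun (by rw [Fin.mk.injEq]; omega)
    rw [show (p ⟨2 * (i.1 + 1), by omega⟩ : PrimeSpectrum (MvPolynomial (Fin 1) R))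
        = p ⟨2 * i.1 + 2, by omega⟩ from hpe]
    have hmono : p ⟨2 * i.1, by omega⟩ ≤ p ⟨2 * i.1 + 2, by omega⟩ :=
      p.monotone (by rw [Fin.mk_le_mk]; omega)
    refine lt_of_le_of_ne
      (Ideal.comap_mono ((PrimeSpectrum.asIdeal_le_asIdeal _ _).2 hmono)) fun hc => ?_
    exact fiber_three (q1 := p ⟨2 * i.1, by omega⟩) (q2 := p ⟨2 * i.1 + 1, by omega⟩)
      (q3 := p ⟨2 * i.1 + 2, by omega⟩)
      (p.strictMono (by rw [Fin.mk_lt_mk]; omega))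
      (p.strictMono (by rw [Fin.mk_lt_mk]; omega)) hc
  omega

private lemma mv_ltSeries (k : Type*) [Field k] : ∀ (n : ℕ)
    (p : LTSeries (PrimeSpectrum (MvPolynomial (Fin n) k))), p.length ≤ chainBound n := by
  intro n
  induction n with
  | zero =>
    exact fun p => ltSeries_le_of_ringEquiv
      ((isEmptyRingEquiv k (Fin 0)) : MvPolynomial (Fin 0) k ≃+* k)
      (fun q => field_ltSeries q) p
  | succ m ih =>
    intro p
    have e : MvPolynomial (Fin (m + 1)) k ≃+* MvPolynomial (Fin 1) (MvPolynomial (Fin m) k) :=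
      ((renameEquiv k ((finSumFinEquiv (m := 1) (n := m)).trans
        (finCongr (by omega)))).symm.trans (sumAlgEquiv k (Fin 1) (Fin m))).toRingEquiv
    exact ltSeries_le_of_ringEquiv e (fun q => step_ltSeries ih q) p

end AuxChain

section AuxHom

private lemma degree_single' {σ : Type*} (i : σ) (m : ℕ) : (Finsupp.single i m).degree = m := by
  classical
  rcases eq_or_ne m 0 with rfl | hm
  · simp [Finsupp.degree]
  · rw [Finsupp.degree_apply, Finsupp.support_single_ne_zero _ hm, Finset.sum_singleton,
      Finsupp.single_eq_same]

private lemma degree_add' {σ : Type*} (a b : σ →₀ ℕ) :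
    (a + b).degree = a.degree + b.degree := by
  simp only [Finsupp.degree_eq_weight_one, map_add]

private lemma homogeneousComponent_X_mul {σ : Type*} {R : Type*} [CommSemiring R]
    [DecidableEq σ] (i : σ) (c : MvPolynomial σ R) (m : ℕ) :
    homogeneousComponent (m + 1) (X i * c) = X i * homogeneousComponent m c := by
  ext d
  rw [coeff_homogeneousComponent, coeff_X_mul', coeff_X_mul', coeff_homogeneousComponent]
  by_cases hi : i ∈ d.support
  · rw [if_pos hi, if_pos hi]
    have hle : Finsupp.single i 1 ≤ d :=
      Finsupp.single_le_iff.2 (Nat.one_le_iff_ne_zero.2 (Finsupp.mem_support_iff.1 hi))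
    have hdeg : (d - Finsupp.single i 1).degree + 1 = d.degree := by
      have h2 : ((d - Finsupp.single i 1) + Finsupp.single i 1).degree = d.degree := by
        rw [tsub_add_cancel_of_le hle]
      rw [degree_add', degree_single'] at h2
      exact h2
    by_cases hd : d.degree = m + 1
    · rw [if_pos hd, if_pos (by omega)]
    · rw [if_neg hd, if_neg (by omega)]
  · rw [if_neg hi, if_neg hi, ite_self]

private lemma homogeneousComponent_sumX_mul {σ : Type*} {R : Type*} [CommSemiring R]
    [DecidableEq σ] (T : Finset σ) (c : MvPolynomial σ R) (m : ℕ) :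
    homogeneousComponent (m + 1) ((∑ i ∈ T, X i) * c)
      = (∑ i ∈ T, X i) * homogeneousComponent m c := by
  rw [Finset.sum_mul, map_sum, Finset.sum_mul]
  exact Finset.sum_congr rfl fun i _ => homogeneousComponent_X_mul i c m

private lemma X_mul_X_eq_monomial {σ : Type*} {R : Type*} [CommSemiring R] (a b : σ) :
    (X a * X b : MvPolynomial σ R)
      = monomial (Finsupp.single a 1 + Finsupp.single b 1) 1 := by
  have h1 : (X a : MvPolynomial σ R) = monomial (Finsupp.single a 1) 1 := by
    rw [← C_mul_X_eq_monomial, C_1, one_mul]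
  have h2 : (X b : MvPolynomial σ R) = monomial (Finsupp.single b 1) 1 := by
    rw [← C_mul_X_eq_monomial, C_1, one_mul]
  rw [h1, h2, monomial_mul, one_mul]

private lemma edgeIdeal_eq_span {k : Type*} [CommRing k] {n : ℕ} (G : SimpleGraph (Fin n)) :
    edgeIdeal k G = Ideal.span ((fun d => monomial d (1 : k)) ''
      {d : Fin n →₀ ℕ | ∃ a b, G.Adj a b ∧ d = Finsupp.single a 1 + Finsupp.single b 1}) := by
  unfold edgeIdeal
  congr 1
  ext q
  constructor
  · rintro ⟨i, j, hij, rfl⟩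
    exact ⟨Finsupp.single i 1 + Finsupp.single j 1, ⟨i, j, hij, rfl⟩,
      (X_mul_X_eq_monomial i j).symm⟩
  · rintro ⟨d, ⟨a, b, hab, rfl⟩, rfl⟩
    exact ⟨a, b, hab, (X_mul_X_eq_monomial a b).symm⟩

private lemma single_add_single_le_two {n : ℕ} {a b j : Fin n}
    (h : Finsupp.single a 1 + Finsupp.single b 1 ≤ Finsupp.single j (2 : ℕ)) :
    a = j ∧ b = j := by
  constructor
  · by_contra hc
    have hja : j ≠ a := fun hj => hc hj.symm
    have h1 := h a
    rw [Finsupp.add_apply, Finsupp.single_eq_same, Finsupp.single_eq_of_ne' hja] at h1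
    omega
  · by_contra hc
    have hjb : j ≠ b := fun hj => hc hj.symm
    have h1 := h b
    rw [Finsupp.add_apply, Finsupp.single_eq_same, Finsupp.single_eq_of_ne' hjb] at h1
    omega

private lemma single_add_single_le {n : ℕ} {a b i j : Fin n} (hab : a ≠ b)
    (h : Finsupp.single a 1 + Finsupp.single b 1
        ≤ Finsupp.single i 1 + Finsupp.single j 1) :
    (a = i ∧ b = j) ∨ (a = j ∧ b = i) := by
  have hmem : ∀ x : Fin n,
      1 ≤ (Finsupp.single a 1 + Finsupp.single b 1 : Fin n →₀ ℕ) x →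
      (i = x ∨ j = x) := by
    intro x hx
    by_contra hcx
    push_neg at hcx
    have h1 := h x
    rw [Finsupp.add_apply, Finsupp.add_apply, Finsupp.single_eq_of_ne' hcx.1,
      Finsupp.single_eq_of_ne' hcx.2] at h1
    rw [Finsupp.add_apply] at hx
    omega
  have ha : i = a ∨ j = a := hmem a (by
    rw [Finsupp.add_apply, Finsupp.single_eq_same]; omega)
  have hb : i = b ∨ j = b := hmem b (by
    rw [Finsupp.add_apply, Finsupp.single_eq_same]; omega)
  rcases ha with h1 | h1 <;> rcases hb with h2 | h2
  · exact absurd (h1.symm.trans h2) hab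
  · exact Or.inl ⟨h1.symm, h2.symm⟩
  · exact Or.inr ⟨h1.symm, h2.symm⟩
  · exact absurd (h1.symm.trans h2) hab

private lemma linear_zero {k : Type*} [Field k] {n : ℕ} (G : SimpleGraph (Fin n))
    (T : Finset (Fin n)) (H : ∀ j, ∃ i ∈ T, ¬ G.Adj i j)
    (ℓ : MvPolynomial (Fin n) k) (hl : ℓ.IsHomogeneous 1)
    (hfl : (∑ i ∈ T, X i) * ℓ ∈ edgeIdeal k G) : ℓ = 0 := by
  classical
  rw [edgeIdeal_eq_span, mem_ideal_span_monomial_image] at hfl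
  have key : ∀ j, coeff (Finsupp.single j 1) ℓ = 0 := by
    intro j
    by_contra hcj
    by_cases hjT : j ∈ T
    · -- square case
      have hcoeff : coeff (Finsupp.single j (2 : ℕ)) ((∑ i ∈ T, X i) * ℓ)
          = coeff (Finsupp.single j 1) ℓ := by
        rw [Finset.sum_mul, coeff_sum]
        rw [Finset.sum_eq_single_of_mem j hjT (fun b hb hbj => by
          rw [coeff_X_mul', if_neg]
          rw [Finsupp.mem_support_iff, Finsupp.single_eq_of_ne' (fun h => hbj h.symm)]
          simp)]
        rw [coeff_X_mul', if_pos (by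
          rw [Finsupp.mem_support_iff, Finsupp.single_eq_same]; omega)]
        congr 1
        ext x
        rcases eq_or_ne j x with rfl | hx
        · simp [Finsupp.tsub_apply]
        · simp [Finsupp.tsub_apply, Finsupp.single_eq_of_ne' hx]
      have hsupp : Finsupp.single j (2 : ℕ) ∈ ((∑ i ∈ T, X i) * ℓ).support := by
        rw [mem_support_iff, hcoeff]; exact hcj
      obtain ⟨d, ⟨a, b, hab, rfl⟩, hled⟩ := hfl _ hsupp
      obtain ⟨rfl, rfl⟩ := single_add_single_le_two hled
      exact G.irrefl hab
    · obtain ⟨i, hiT, hnadj⟩ := H j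
      have hij : i ≠ j := fun h => hjT (h ▸ hiT)
      have hcoeff : coeff (Finsupp.single i 1 + Finsupp.single j 1) ((∑ i' ∈ T, X i') * ℓ)
          = coeff (Finsupp.single j 1) ℓ := by
        rw [Finset.sum_mul, coeff_sum]
        rw [Finset.sum_eq_single_of_mem i hiT (fun b hb hbi => by
          have hbj : b ≠ j := fun h => hjT (h ▸ hb)
          rw [coeff_X_mul', if_neg]
          rw [Finsupp.mem_support_iff, Finsupp.add_apply,
            Finsupp.single_eq_of_ne' (fun h => hbi h.symm),
            Finsupp.single_eq_of_ne' (fun h => hbj h.symm)]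
          simp)]
        rw [coeff_X_mul', if_pos (by
          rw [Finsupp.mem_support_iff, Finsupp.add_apply, Finsupp.single_eq_same]
          omega)]
        rw [add_tsub_cancel_left]
      have hsupp : Finsupp.single i 1 + Finsupp.single j 1
          ∈ ((∑ i' ∈ T, X i') * ℓ).support := by
        rw [mem_support_iff, hcoeff]; exact hcj
      obtain ⟨d, ⟨a, b, hab, rfl⟩, hled⟩ := hfl _ hsupp
      rcases single_add_single_le hab.ne hled with ⟨rfl, rfl⟩ | ⟨rfl, rfl⟩
      · exact hnadj hab
      · exact hnadj hab.symm
  rw [eq_zero_iff]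
  intro d
  by_cases hd : d.degree = 1
  · obtain ⟨j, rfl⟩ : ∃ j, d = Finsupp.single j 1 := by
      have hdne : d ≠ 0 := by
        intro h0
        rw [h0, map_zero] at hd
        omega
      obtain ⟨j, hj⟩ := Finsupp.support_nonempty_iff.2 hdne
      refine ⟨j, ?_⟩
      have hj1 : d j = 1 := by
        have hle1 : d j ≤ 1 := hd ▸ Finsupp.le_degree j d
        have hne0 : d j ≠ 0 := Finsupp.mem_support_iff.1 hj
        omega
      ext x
      rcases eq_or_ne j x with rfl | hx
      · rw [Finsupp.single_eq_same, hj1]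
      · rw [Finsupp.single_eq_of_ne' hx]
        by_contra hdx
        have hxsupp : x ∈ d.support := Finsupp.mem_support_iff.2 hdx
        have hsum : d j + d x ≤ d.degree := by
          have hsub : ({j, x} : Finset (Fin n)) ⊆ d.support := by
            intro y hy
            rcases Finset.mem_insert.1 hy with rfl | hy2
            · exact hj
            · rw [Finset.mem_singleton.1 hy2]; exact hxsupp
          calc d j + d x = ∑ y ∈ ({j, x} : Finset (Fin n)), d y :=
                (Finset.sum_pair hx).symm
            _ ≤ ∑ y ∈ d.support, d y := Finset.sum_le_sum_of_subset hsub
            _ = d.degree := rfl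
        omega
    exact key j
  · exact hl.coeff_eq_zero hd

end AuxHom

/-- With hypotheses as in the paper's Corollary 3.6, `G` has a vertex of degree
at least `r`; in fact there is a vertex adjacent to every one of `i₁, …, i_r`. -/
theorem stmt3 {k : Type*} [Field k] {n : ℕ} (G : SimpleGraph (Fin n))
    [DecidableRel G.Adj]
    (T : Finset (Fin n)) (hT : T.Nonempty)
    (f : MvPolynomial (Fin n) k) (hf : f = ∑ i ∈ T, X i)
    (B A : Ideal (MvPolynomial (Fin n) k))
    (hBmon : IsMonomialIdeal B) (hAhom : IsHomogeneousIdeal A)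
    (hAB : A ≤ B) (hcolon : A.colon (Ideal.span {f}) = A)
    (hht : Ideal.ht A + 1 = Ideal.ht (edgeIdeal k G))
    (hlink : edgeIdeal k G = Ideal.span {f} * B + A) :
    ∃ j : Fin n, (∀ i ∈ T, G.Adj i j) ∧ T.card ≤ G.degree j := by
  classical
  by_contra hcon
  push_neg at hcon
  -- If some vertex is adjacent to everything in `T`, its degree is at least `T.card`.
  have H : ∀ j, ∃ i ∈ T, ¬ G.Adj i j := by
    intro j
    by_contra hx
    push_neg at hx
    have hdeg : T.card ≤ G.degree j := by
      have hsub : T ⊆ G.neighborFinset j := fun i hi =>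
        (SimpleGraph.mem_neighborFinset G j i).2 (hx i hi).symm
      exact Finset.card_le_card hsub
    have := hcon j hx
    omega
  -- `A` is contained in the edge ideal.
  have hA_le : A ≤ edgeIdeal k G := by
    rw [hlink, Submodule.add_eq_sup]
    exact le_sup_right
  -- Every edge generator lies in `A`.
  have hedge_mem : ∀ a b : Fin n, G.Adj a b → (X a * X b : MvPolynomial (Fin n) k) ∈ A := by
    intro a b hab
    have hgen : (X a * X b : MvPolynomial (Fin n) k) ∈ edgeIdeal k G :=
      Ideal.subset_span ⟨a, b, hab, rfl⟩
    have hgen' := hgen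
    rw [hlink, Submodule.add_eq_sup] at hgen'
    obtain ⟨y, hy, z, hz, hyz⟩ := Submodule.mem_sup.1 hgen'
    obtain ⟨cB, hcB, rfl⟩ := Ideal.mem_span_singleton_mul.1 hy
    have heq : (X a * X b : MvPolynomial (Fin n) k) = f * cB + z := hyz.symm
    have h2 := congrArg (homogeneousComponent 2) heq
    rw [map_add] at h2
    have hXaXb : homogeneousComponent 2 (X a * X b : MvPolynomial (Fin n) k) = X a * X b := by
      have hh : (X a * X b : MvPolynomial (Fin n) k).IsHomogeneous 2 := by
        simpa using (isHomogeneous_X k a).mul (isHomogeneous_X k b)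
      rw [homogeneousComponent_of_mem ((mem_homogeneousSubmodule 2 _).2 hh), if_pos rfl]
    have hfc : homogeneousComponent 2 (f * cB) = f * homogeneousComponent 1 cB := by
      rw [hf]
      exact homogeneousComponent_sumX_mul T cB 1
    have hz2 : homogeneousComponent 2 z ∈ A := hAhom z hz 2
    have heq2 : (X a * X b : MvPolynomial (Fin n) k)
        = f * homogeneousComponent 1 cB + homogeneousComponent 2 z := by
      rw [← hXaXb, h2, hfc]
    have hfl : f * homogeneousComponent 1 cB ∈ edgeIdeal k G := by
      have hsub : f * homogeneousComponent 1 cB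
          = (X a * X b : MvPolynomial (Fin n) k) - homogeneousComponent 2 z := by
        rw [heq2]; ring
      rw [hsub]
      exact Ideal.sub_mem _ hgen (hA_le hz2)
    have hl0 : homogeneousComponent 1 cB = 0 := by
      refine linear_zero G T H _ (homogeneousComponent_isHomogeneous 1 cB) ?_
      rw [← hf]
      exact hfl
    rw [hl0, mul_zero, zero_add] at heq2
    rw [heq2]
    exact hz2
  -- Hence `A = edgeIdeal k G`.
  have hEA : edgeIdeal k G ≤ A := by
    unfold edgeIdeal
    rw [Ideal.span_le]
    rintro q ⟨a, b, hab, rfl⟩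
    exact hedge_mem a b hab
  have hAeq : A = edgeIdeal k G := le_antisymm hA_le hEA
  -- Finite height of the edge ideal.
  have hP0 : (RingHom.ker (constantCoeff : MvPolynomial (Fin n) k →+* k)).IsPrime :=
    RingHom.ker_isPrime _
  set P0 : PrimeSpectrum (MvPolynomial (Fin n) k) :=
    ⟨RingHom.ker (constantCoeff : MvPolynomial (Fin n) k →+* k), hP0⟩ with hP0def
  have hP0le : edgeIdeal k G ≤ P0.asIdeal := by
    unfold edgeIdeal
    rw [Ideal.span_le]
    rintro q ⟨a, b, hab, rfl⟩
    show X a * X b ∈ RingHom.ker (constantCoeff : MvPolynomial (Fin n) k →+* k)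
    rw [RingHom.mem_ker, map_mul, constantCoeff_X, zero_mul]
  have hbound : Ideal.ht (edgeIdeal k G) ≤ (chainBound n : ℕ∞) := by
    have h1 : Ideal.ht (edgeIdeal k G) ≤ Order.height P0 := by
      exact iInf_le
        (fun P : {P : PrimeSpectrum (MvPolynomial (Fin n) k) // edgeIdeal k G ≤ P.asIdeal} =>
          Order.height P.1) ⟨P0, hP0le⟩
    refine h1.trans (Order.height_le fun q _ => ?_)
    exact_mod_cast mv_ltSeries k n q
  rw [hAeq] at hht
  have hne_top : Ideal.ht (edgeIdeal k G) ≠ ⊤ := by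
    intro htop
    rw [htop, top_le_iff] at hbound
    exact WithTop.natCast_ne_top (chainBound n) hbound
  obtain ⟨m, hm⟩ := WithTop.ne_top_iff_exists.1 hne_top
  rw [← hm] at hht
  have : (m : ℕ∞) + 1 = (m : ℕ∞) := hht
  have hcontr : m + 1 = m := by exact_mod_cast this
  omega
end

section
/- Let A and B be proper homogeneous ideals of S, and let C = (c_1,…,c_r) be an ideal generated by homogeneous polynomials c_1,…,c_r with d = max_{1 ≤ i ≤ r} deg(c_i). Suppose f ∈ S is a homogeneous polynomial of positive degree such that C = fB + A and ht(A) + 1 = ht(C). Then 1 ≤ deg(f) < d. -/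
open MvPolynomial

lemma ht_le_height {R : Type*} [CommRing R] (I : Ideal R) (P : PrimeSpectrum R)
    (h : I ≤ P.asIdeal) : Ideal.ht I ≤ Order.height P :=
  iInf_le (fun P : {P : PrimeSpectrum R // I ≤ P.asIdeal} => Order.height P.1) ⟨P, h⟩

open Polynomial in
lemma aux_comap_lt_comap_of_equiv {S T : Type*} [CommRing S] [CommRing T] (e : S ≃+* T)
    {I J : Ideal T} (h : I < J) : I.comap (e : S →+* T) < J.comap (e : S →+* T) := by
  refine lt_of_le_of_ne (Ideal.comap_mono h.le) (fun heq => h.ne ?_)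
  ext x
  obtain ⟨y, rfl⟩ := e.surjective x
  constructor
  · intro hy
    have : y ∈ I.comap (e : S →+* T) := hy
    rw [heq] at this; exact this
  · intro hy
    have : y ∈ J.comap (e : S →+* T) := hy
    rw [← heq] at this; exact this

open Polynomial in
lemma no_three_primes_s4 {R : Type*} [CommRing R] {q₀ q₁ q₂ : Ideal R[X]}
    (h₀ : q₀.IsPrime) (h₁ : q₁.IsPrime) (h₂ : q₂.IsPrime)
    (l01 : q₀ < q₁) (l12 : q₁ < q₂)
    (hcom : q₀.comap (C : R →+* R[X]) = q₂.comap (C : R →+* R[X])) : False := by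
  set p : Ideal R := q₀.comap (C : R →+* R[X]) with hp
  haveI hpprime : p.IsPrime := Ideal.IsPrime.comap _
  have hcom₁ : q₁.comap (C : R →+* R[X]) = p :=
    le_antisymm (hcom ▸ Ideal.comap_mono l12.le) (Ideal.comap_mono l01.le)
  have hcom₀ : q₀.comap (C : R →+* R[X]) = p := rfl
  have hcom₂ : q₂.comap (C : R →+* R[X]) = p := hcom.symm
  -- the quotient ring A = R/p, a domain, and its fraction field K
  let A := R ⧸ p
  let K := FractionRing A
  -- kernel inclusion
  have hker : ∀ {q : Ideal R[X]}, q.comap (C : R →+* R[X]) = p → Ideal.map (C : R →+* R[X]) p ≤ q :=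
    fun {q} hq => Ideal.map_le_iff_le_comap.mpr (le_of_eq hq.symm)
  let mkq : R[X] →+* R[X] ⧸ Ideal.map (C : R →+* R[X]) p :=
    Ideal.Quotient.mk (Ideal.map (C : R →+* R[X]) p)
  have hmkker : RingHom.ker mkq = Ideal.map (C : R →+* R[X]) p := Ideal.mk_ker
  let ψ : A[X] ≃+* R[X] ⧸ Ideal.map (C : R →+* R[X]) p :=
    p.polynomialQuotientEquivQuotientPolynomial
  -- the three ideals downstairs
  let Q : Ideal R[X] → Ideal A[X] := fun q => (q.map mkq).comap (ψ : A[X] →+* _)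
  have hmapprime : ∀ {q : Ideal R[X]}, q.IsPrime → q.comap (C : R →+* R[X]) = p →
      (q.map mkq).IsPrime := fun {q} hq hq' =>
    Ideal.map_isPrime_of_surjective Ideal.Quotient.mk_surjective (hmkker.le.trans (hker hq'))
  have hQprime : ∀ {q : Ideal R[X]}, q.IsPrime → q.comap (C : R →+* R[X]) = p →
      (Q q).IsPrime := fun {q} hq hq' =>
    haveI := hmapprime hq hq'
    Ideal.IsPrime.comap _
  have hcomapmap : ∀ {q : Ideal R[X]}, q.comap (C : R →+* R[X]) = p →
      (q.map mkq).comap mkq = q := by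
    intro q hq
    rw [Ideal.comap_map_of_surjective mkq Ideal.Quotient.mk_surjective]
    rw [← RingHom.ker_eq_comap_bot, hmkker]
    exact sup_eq_left.mpr (hker hq)
  have hQlt : ∀ {q q' : Ideal R[X]}, q.comap (C : R →+* R[X]) = p →
      q'.comap (C : R →+* R[X]) = p → q < q' → Q q < Q q' := by
    intro q q' hq hq' hlt
    apply aux_comap_lt_comap_of_equiv
    refine lt_of_le_of_ne (Ideal.map_mono hlt.le) (fun heq => hlt.ne ?_)
    rw [← hcomapmap hq, ← hcomapmap hq', heq]
  -- Q q has trivial contraction to A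
  have hQbot : ∀ {q : Ideal R[X]}, q.comap (C : R →+* R[X]) = p →
      ∀ a : A, (C a : A[X]) ∈ Q q → a = 0 := by
    intro q hq a ha
    obtain ⟨r, rfl⟩ := Ideal.Quotient.mk_surjective a
    have key : ψ (C (Ideal.Quotient.mk p r)) = mkq (C r) := by
      have := p.polynomialQuotientEquivQuotientPolynomial_map_mk (C r)
      rwa [Polynomial.map_C] at this
    have : mkq (C r) ∈ q.map mkq := by
      have : ψ (C (Ideal.Quotient.mk p r)) ∈ q.map mkq := ha
      rwa [key] at this
    have hrq : Polynomial.C r ∈ q := by rw [← hcomapmap hq]; exact this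
    have : r ∈ p := by rw [← hq]; exact hrq
    exact Ideal.Quotient.eq_zero_iff_mem.mpr this
  -- now work over the domain A and its fraction field K
  haveI : IsDomain A := Ideal.Quotient.isDomain p
  let M : Submonoid A[X] := (nonZeroDivisors A).map (C : A →+* A[X])
  letI : Algebra A[X] K[X] := (Polynomial.mapRingHom (algebraMap A K)).toAlgebra
  have halg : (algebraMap A[X] K[X]) = Polynomial.mapRingHom (algebraMap A K) := rfl
  haveI hloc : IsLocalization M K[X] := by
    constructor; constructor
    · rintro ⟨y, a, ha, rfl⟩
      rw [halg]
      simp only [Polynomial.coe_mapRingHom, Polynomial.map_C]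
      exact Polynomial.isUnit_C.mpr (IsLocalization.map_units K ⟨a, ha⟩)
    · intro z
      obtain ⟨b, hbM, hb0⟩ := IsLocalization.integerNormalization_spec (nonZeroDivisors A) z
      have hb : ∀ i, algebraMap A K ((IsLocalization.integerNormalization (nonZeroDivisors A) z).coeff i) = b • z.coeff i := fun i => by
        have := congrArg (Polynomial.coeff · i) hb0
        simpa only [Polynomial.coeff_map, Polynomial.coeff_smul] using this
      refine ⟨⟨IsLocalization.integerNormalization (nonZeroDivisors A) z,
        ⟨C (b : A), ⟨(b : A), hbM, rfl⟩⟩⟩, ?_⟩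
      rw [halg]
      simp only [Polynomial.coe_mapRingHom, Polynomial.map_C]
      ext i
      simp only [Polynomial.coeff_mul_C, Polynomial.coeff_map, hb i, Algebra.smul_def,
        mul_comm]
    · intro x y hxy
      rw [halg] at hxy
      have : Function.Injective (Polynomial.mapRingHom (algebraMap A K)) :=
        Polynomial.map_injective _ (IsFractionRing.injective A K)
      exact ⟨1, by rw [this hxy]⟩
  -- disjointness
  have hdisj : ∀ {q : Ideal R[X]}, q.comap (C : R →+* R[X]) = p →
      Disjoint (M : Set A[X]) ((Q q : Ideal A[X]) : Set A[X]) := by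
    intro q hq
    rw [Set.disjoint_left]
    rintro x ⟨a, ha, rfl⟩ hx
    have := hQbot hq a hx
    rw [this] at ha
    exact zero_notMem_nonZeroDivisors ha
  -- transfer the chain to K[X]
  let ι := (IsLocalization.orderIsoOfPrime M K[X]).symm
  let P₀ := ι ⟨Q q₀, hQprime h₀ hcom₀, hdisj hcom₀⟩
  let P₁ := ι ⟨Q q₁, hQprime h₁ hcom₁, hdisj hcom₁⟩
  let P₂ := ι ⟨Q q₂, hQprime h₂ hcom₂, hdisj hcom₂⟩
  have hP01 : P₀ < P₁ := ι.strictMono (Subtype.mk_lt_mk.mpr (hQlt hcom₀ hcom₁ l01))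
  have hP12 : P₁ < P₂ := ι.strictMono (Subtype.mk_lt_mk.mpr (hQlt hcom₁ hcom₂ l12))
  -- K[X] is a PID, hence has dimension ≤ 1
  haveI := P₁.2
  haveI := P₂.2
  have hP01' : P₀.1 < P₁.1 := hP01
  have hP12' : P₁.1 < P₂.1 := hP12
  have hne : P₁.1 ≠ ⊥ := fun h => not_lt_bot (h ▸ hP01')
  have hmax : P₁.1.IsMaximal := Ideal.IsPrime.isMaximal P₁.2 hne
  have : P₁.1 = P₂.1 := hmax.eq_of_le P₂.2.ne_top hP12'.le
  exact hP12'.ne this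

open Polynomial in
lemma polyChainBound {R : Type*} [CommRing R] {m : ℕ}
    (h : ∀ c : LTSeries (PrimeSpectrum R), c.length ≤ m)
    (c : LTSeries (PrimeSpectrum R[X])) : c.length ≤ 2 * m + 1 := by
  by_contra hlen
  push_neg at hlen
  have key : ∀ (j₀ j₂ : Fin (c.length + 1)), j₀.1 + 2 = j₂.1 →
      ((c j₀).asIdeal.comap (C : R →+* R[X])) < ((c j₂).asIdeal.comap (C : R →+* R[X])) := by
    intro j₀ j₂ hj
    have h01 : c j₀ < c ⟨j₀.1 + 1, by omega⟩ := c.strictMono (by simp [Fin.lt_def])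
    have h12 : c ⟨j₀.1 + 1, by omega⟩ < c j₂ := c.strictMono (by simp [Fin.lt_def]; omega)
    refine lt_of_le_of_ne
      (Ideal.comap_mono ((PrimeSpectrum.asIdeal_le_asIdeal _ _).mpr (h01.trans h12).le))
      (fun heq => no_three_primes_s4 (c j₀).2 (c ⟨j₀.1 + 1, by omega⟩).2 (c j₂).2
        ((PrimeSpectrum.asIdeal_lt_asIdeal _ _).mpr h01)
        ((PrimeSpectrum.asIdeal_lt_asIdeal _ _).mpr h12) heq)
  let q : LTSeries (PrimeSpectrum R) :=
    { length := m + 1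
      toFun := fun i => ⟨((c ⟨2 * i.1, by omega⟩).asIdeal).comap (C : R →+* R[X]),
        Ideal.IsPrime.comap _⟩
      step := by
        intro i
        change (_ : PrimeSpectrum R) < _
        rw [← PrimeSpectrum.asIdeal_lt_asIdeal]
        exact key ⟨2 * i.1, by omega⟩ ⟨2 * (i.1 + 1), by omega⟩ (by show 2 * i.1 + 2 = 2 * (i.1 + 1); omega) }
  exact Nat.not_succ_le_self m (h q)

lemma chainBound_transfer {S T : Type*} [CommRing S] [CommRing T] (e : S ≃+* T) {m : ℕ}
    (h : ∀ c : LTSeries (PrimeSpectrum S), c.length ≤ m)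
    (c : LTSeries (PrimeSpectrum T)) : c.length ≤ m := by
  have hsm : StrictMono (fun P : PrimeSpectrum T =>
      (⟨P.asIdeal.comap (e : S →+* T), Ideal.IsPrime.comap _⟩ : PrimeSpectrum S)) := by
    intro x y hxy
    rw [← PrimeSpectrum.asIdeal_lt_asIdeal] at hxy ⊢
    refine lt_of_le_of_ne (Ideal.comap_mono hxy.le) (fun heq => hxy.ne ?_)
    dsimp only at heq
    ext z
    obtain ⟨w, rfl⟩ := e.surjective z
    constructor
    · intro hw
      have : w ∈ x.asIdeal.comap (e : S →+* T) := hw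
      rw [heq] at this; exact this
    · intro hw
      have : w ∈ y.asIdeal.comap (e : S →+* T) := hw
      rw [← heq] at this; exact this
  have := h (c.map _ hsm)
  simpa using this

lemma mvChainBound (k : Type*) [Field k] (n : ℕ)
    (c : LTSeries (PrimeSpectrum (MvPolynomial (Fin n) k))) : c.length ≤ 2 ^ n - 1 := by
  induction n with
  | zero =>
    refine chainBound_transfer (MvPolynomial.isEmptyRingEquiv k (Fin 0)).symm ?_ c
    intro c'
    by_contra hlen
    push_neg at hlen
    have h01 : c' ⟨0, by omega⟩ < c' ⟨1, by omega⟩ := c'.strictMono (by simp [Fin.lt_def])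
    have e0 : (c' ⟨0, by omega⟩).asIdeal = ⊥ :=
      Ideal.eq_bot_of_prime _
    have e1 : (c' ⟨1, by omega⟩).asIdeal = ⊥ :=
      Ideal.eq_bot_of_prime _
    rw [← PrimeSpectrum.asIdeal_lt_asIdeal, e0, e1] at h01
    exact lt_irrefl _ h01
  | succ n ih =>
    have h2 : (1 : ℕ) ≤ 2 ^ n := Nat.one_le_two_pow
    have := chainBound_transfer (MvPolynomial.finSuccEquiv k n).toRingEquiv.symm
      (polyChainBound ih) c
    calc c.length ≤ 2 * (2 ^ n - 1) + 1 := this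
      _ ≤ 2 ^ (n + 1) - 1 := by omega

set_option maxHeartbeats 1000000 in
/-- the paper's Lemma 3.1: if `C = (c₁, …, c_r)` with each `cᵢ` homogeneous of
degree `eᵢ`, `d = max eᵢ`, and `C = fB + A` with `f` homogeneous of positive degree and
`ht(A) + 1 = ht(C)`, then `1 ≤ deg f < d`. -/
theorem stmt4 {k : Type*} [Field k] {n : ℕ}
    (A B : Ideal (MvPolynomial (Fin n) k))
    (hAhom : IsHomogeneousIdeal A) (hBhom : IsHomogeneousIdeal B)
    (hAproper : A ≠ ⊤) (hBproper : B ≠ ⊤)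
    {r : ℕ} (hr : 0 < r) (c : Fin r → MvPolynomial (Fin n) k) (e : Fin r → ℕ)
    (hc : ∀ i, (c i).IsHomogeneous (e i)) (hc0 : ∀ i, c i ≠ 0)
    (C : Ideal (MvPolynomial (Fin n) k)) (hC : C = Ideal.span (Set.range c))
    (d : ℕ) (hd : d = Finset.univ.sup e)
    (f : MvPolynomial (Fin n) k) (df : ℕ) (hdf : 0 < df) (hfhom : f.IsHomogeneous df)
    (hf0 : f ≠ 0)
    (hlink : C = Ideal.span {f} * B + A)
    (hht : Ideal.ht A + 1 = Ideal.ht C) :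
    1 ≤ df ∧ df < d := by
  refine ⟨hdf, ?_⟩
  by_contra hlt
  push_neg at hlt  -- d ≤ df
  -- every cᵢ lies in A
  have hciA : ∀ i : Fin r, c i ∈ A := by
    intro i
    have hciC : c i ∈ C := hC ▸ Ideal.subset_span ⟨i, rfl⟩
    rw [hlink, Submodule.add_eq_sup] at hciC
    obtain ⟨y, hy, a, ha, hsum⟩ := Submodule.mem_sup.mp hciC
    obtain ⟨t, htB, hft⟩ := Ideal.mem_span_singleton_mul.mp hy
    -- the degree-0 component of t is zero
    have ht0 : homogeneousComponent 0 t = 0 := by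
      have hmem : homogeneousComponent 0 t ∈ B := hBhom t htB 0
      rw [homogeneousComponent_zero] at hmem ⊢
      by_contra hne
      have hc0ne : MvPolynomial.coeff 0 t ≠ 0 := fun h => hne (by rw [h, map_zero])
      exact hBproper (B.eq_top_of_isUnit_mem hmem (hc0ne.isUnit.map MvPolynomial.C))
    -- the degree (e i) component of f * t is zero
    have hcomp0 : homogeneousComponent (e i) (f * t) = 0 := by
      have hei : e i ≤ df := le_trans (hd ▸ Finset.le_sup (Finset.mem_univ i)) hlt
      conv_lhs => rw [← sum_homogeneousComponent t]
      rw [Finset.mul_sum, map_sum]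
      refine Finset.sum_eq_zero fun j _ => ?_
      rcases Nat.eq_zero_or_pos j with rfl | hj
      · rw [ht0, mul_zero, map_zero]
      · have hhom : f * homogeneousComponent j t ∈
            homogeneousSubmodule (Fin n) k (df + j) :=
          (mem_homogeneousSubmodule _ _).mpr
            (hfhom.mul (homogeneousComponent_isHomogeneous j t))
        rw [homogeneousComponent_of_mem hhom, if_neg (by omega)]
    -- conclude c i ∈ A
    have : c i = homogeneousComponent (e i) (c i) := by
      rw [homogeneousComponent_of_mem ((mem_homogeneousSubmodule _ _).mpr (hc i)), if_pos rfl]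
    rw [this, ← hsum, ← hft, map_add, hcomp0, zero_add]
    exact hAhom a ha (e i)
  -- hence C = A
  have hCA : C = A := by
    refine le_antisymm ?_ ?_
    · rw [hC, Ideal.span_le]
      rintro _ ⟨i, rfl⟩
      exact hciA i
    · rw [hlink, Submodule.add_eq_sup]
      exact le_sup_right
  -- but ht A is finite, contradiction
  obtain ⟨M, hMmax, hAM⟩ := Ideal.exists_le_maximal A hAproper
  have hhtle : Ideal.ht A ≤ Order.height (⟨M, hMmax.isPrime⟩ : PrimeSpectrum _) :=
    ht_le_height A ⟨M, hMmax.isPrime⟩ hAM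
  have hheight : Order.height (⟨M, hMmax.isPrime⟩ : PrimeSpectrum (MvPolynomial (Fin n) k)) ≤
      ((2 ^ n - 1 : ℕ) : ℕ∞) :=
    Order.height_le fun p _ => Nat.cast_le.mpr (mvChainBound k n p)
  have hne : Ideal.ht A ≠ ⊤ :=
    ((hhtle.trans hheight).trans_lt (WithTop.coe_lt_top _)).ne
  rw [hCA] at hht
  have : Ideal.ht A < Ideal.ht A + 1 := (ENat.lt_add_one_iff hne).mpr le_rfl
  rw [hht] at this
  exact lt_irrefl _ this
end

section
/- Let G be a finite simple graph on vertex set {1,…,n} with at least one edge and I(G) ⊆ S its edge ideal. Suppose A and B are proper homogeneous ideals of S, f ∈ S is a homogeneous polynomial of positive degree, I(G) = fB + A, and ht(A) + 1 = ht(I(G)). Then deg(f) = 1. -/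
open MvPolynomial

lemma exists_coeff_zero_ne {S A : Type*} [CommRing S] [CommRing A] [IsDomain A] [Algebra S A]
    {b : A} (hb : b ≠ 0) :
    ∀ N (pp : Polynomial S), pp.natDegree ≤ N → pp ≠ 0 → Polynomial.aeval b pp = 0 →
      ∃ q : Polynomial S, q ≠ 0 ∧ q.coeff 0 ≠ 0 ∧ Polynomial.aeval b q = 0 := by
  intro N
  induction N with
  | zero =>
    intro pp hdeg hne hev
    refine ⟨pp, hne, fun hc => hne ?_, hev⟩
    rw [Polynomial.eq_C_of_natDegree_le_zero hdeg, hc, map_zero]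
  | succ N ih =>
    intro pp hdeg hne hev
    by_cases hc : pp.coeff 0 = 0
    · have hXdvd : pp = Polynomial.X * pp.divX := by
        conv_lhs => rw [← Polynomial.X_mul_divX_add pp]
        rw [hc, map_zero, add_zero]
      have hdiv0 : pp.divX ≠ 0 := fun h => hne (by rw [hXdvd, h, mul_zero])
      have hdeg' : pp.divX.natDegree ≤ N := by
        rw [Polynomial.natDegree_divX_eq_natDegree_tsub_one]
        omega
      have hev' : Polynomial.aeval b pp.divX = 0 := by
        have h2 : b * Polynomial.aeval b pp.divX = 0 := by
          rw [← hev]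
          conv_rhs => rw [hXdvd]
          rw [map_mul, Polynomial.aeval_X]
        rcases mul_eq_zero.1 h2 with h | h
        · exact absurd h hb
        · exact h
      exact ih pp.divX hdeg' hdiv0 hev'
    · exact ⟨pp, hne, hc, hev⟩

lemma step_lemma {k : Type*} [Field k] {R : Type*} [CommRing R] [Algebra k R]
    {p q : Ideal R} [p.IsPrime] [q.IsPrime] (hpq : p < q) {m : ℕ}
    (f : Fin m → R ⧸ q) (hf : AlgebraicIndependent k f) :
    ∃ g : Fin (m+1) → R ⧸ p, AlgebraicIndependent k g := by
  classical
  have hle : p ≤ q := le_of_lt hpq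
  set φ : (R ⧸ p) →ₐ[k] (R ⧸ q) :=
    Ideal.Quotient.liftₐ p (Ideal.Quotient.mkₐ k q)
      (fun a ha => by
        rw [Ideal.Quotient.mkₐ_eq_mk, Ideal.Quotient.eq_zero_iff_mem]
        exact hle ha) with hφdef
  have hφmk : ∀ x : R, φ (Ideal.Quotient.mk p x) = Ideal.Quotient.mk q x := fun x => rfl
  have hφsurj : Function.Surjective φ := by
    intro z
    obtain ⟨x, rfl⟩ := Ideal.Quotient.mk_surjective z
    exact ⟨Ideal.Quotient.mk p x, hφmk x⟩
  choose t ht using fun i => hφsurj (f i)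
  have htf : ⇑φ ∘ t = f := funext ht
  have hti : AlgebraicIndependent k t := AlgebraicIndependent.of_comp φ (htf ▸ hf)
  obtain ⟨x, hxq, hxp⟩ := SetLike.exists_of_lt hpq
  set b : R ⧸ p := Ideal.Quotient.mk p x with hbdef
  have hb0 : b ≠ 0 := fun h => hxp (Ideal.Quotient.eq_zero_iff_mem.1 h)
  have hφb : φ b = 0 := by
    rw [hbdef, hφmk, Ideal.Quotient.eq_zero_iff_mem]
    exact hxq
  have htrans : Transcendental (↥(Algebra.adjoin k (Set.range t))) b := by
    intro halg
    obtain ⟨pp, hpp0, hppev⟩ := halg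
    obtain ⟨qq, hqq0, hqqc, hqqev⟩ :=
      exists_coeff_zero_ne hb0 pp.natDegree pp le_rfl hpp0 hppev
    -- apply φ to the evaluation
    have h0 : φ (Polynomial.aeval b qq) = 0 := by rw [hqqev, map_zero]
    rw [Polynomial.aeval_eq_sum_range, map_sum] at h0
    rw [Finset.sum_eq_single 0 (fun i _ hi => by
        rw [Algebra.smul_def, map_mul, map_pow, hφb, zero_pow hi, mul_zero])
      (fun h => absurd (Finset.mem_range.2 (Nat.succ_pos _)) h)] at h0
    rw [Algebra.smul_def, pow_zero, mul_one] at h0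
    -- h0 : φ (algebraMap _ _ (qq.coeff 0)) = 0
    have hc : φ ((qq.coeff 0 : R ⧸ p)) = 0 := by
      rw [Subalgebra.algebraMap_eq] at h0
      exact h0
    -- coeff 0 lies in adjoin = range of aeval t
    have hmem : (qq.coeff 0 : R ⧸ p) ∈ Algebra.adjoin k (Set.range t) := (qq.coeff 0).2
    obtain ⟨P0, hP0'⟩ := (Algebra.adjoin_range_eq_range_aeval k t).le hmem
    have hP0 : aeval t P0 = ((qq.coeff 0 : R ⧸ p)) := hP0'
    have hP00 : aeval f P0 = 0 := by
      have h1 : φ (aeval t P0) = aeval (fun i => φ (t i)) P0 :=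
        DFunLike.congr_fun (MvPolynomial.comp_aeval t φ) P0
      simp only [ht] at h1
      rw [← h1, hP0, hc]
    have hinj := algebraicIndependent_iff_injective_aeval.1 hf
    have : P0 = 0 := by
      apply hinj
      rw [hP00, map_zero]
    rw [this, map_zero] at hP0
    exact hqqc (Subtype.ext hP0.symm)
  have hopt : AlgebraicIndependent k (fun o : Option (Fin m) => o.elim b t) :=
    (hti.option_iff_transcendental b).2 htrans
  exact ⟨_, (algebraicIndependent_equiv (finSuccEquiv m)).2 hopt⟩
open MvPolynomial

lemma finsupp_apply_le_sum {n : ℕ} (u : Fin n →₀ ℕ) (i : Fin n) : u i ≤ u.sum fun _ e => e := by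
  by_cases h : i ∈ u.support
  · exact Finset.single_le_sum (fun _ _ => Nat.zero_le _) h
  · simp [Finsupp.notMem_support_iff.1 h]

lemma trdeg_le_of_generators {k : Type*} [Field k] {R : Type*} [CommRing R] [Algebra k R]
    [Nontrivial R] {n m : ℕ}
    (y : Fin n → R) (hy : ∀ r : R, r ∈ Algebra.adjoin k (Set.range y))
    (f : Fin m → R) (hf : AlgebraicIndependent k f) : m ≤ n := by
  classical
  have hPex : ∀ i, ∃ P : MvPolynomial (Fin n) k, aeval y P = f i := by
    intro i
    have h := hy (f i)
    rw [Algebra.adjoin_range_eq_range_aeval] at h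
    exact h
  choose P hP using hPex
  set D := Finset.univ.sup (fun i => (P i).totalDegree) with hD
  have key : ∀ N : ℕ, (N+1)^m ≤ (D*m*N+1)^n := by
    intro N
    set T : Finset R := (Fintype.piFinset fun _ : Fin n => Finset.range (D*m*N+1)).image
        (fun e : Fin n → ℕ => aeval y (monomial (Finsupp.equivFunOnFinite.symm e) (1:k))) with hT
    have hspan : ∀ d : Fin m → ℕ, (∀ i, d i ≤ N) →
        aeval f (monomial (Finsupp.equivFunOnFinite.symm d) (1:k)) ∈
          Submodule.span k (T : Set R) := by
      intro d hd
      have h1 : aeval f (monomial (Finsupp.equivFunOnFinite.symm d) (1:k))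
          = aeval y (∏ i, P i ^ d i) := by
        rw [aeval_monomial, map_one, one_mul, Finsupp.prod_fintype _ _ (fun i => pow_zero _)]
        rw [map_prod]
        refine Finset.prod_congr rfl fun i _ => ?_
        rw [map_pow, hP]
        rfl
      have hdeg : (∏ i, P i ^ d i).totalDegree ≤ D*m*N := by
        calc (∏ i, P i ^ d i).totalDegree ≤ ∑ i, (P i ^ d i).totalDegree :=
              totalDegree_finset_prod _ _
        _ ≤ ∑ _i : Fin m, N * D := by
              refine Finset.sum_le_sum fun i _ => ?_
              exact (totalDegree_pow _ _).trans
                (Nat.mul_le_mul (hd i) (Finset.le_sup (f := fun j => (P j).totalDegree) (Finset.mem_univ i)))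
        _ = m * (N * D) := by simp [Finset.sum_const, Finset.card_univ, mul_comm]
        _ = D*m*N := by ring
      rw [h1]
      set Q := ∏ i, P i ^ d i with hQ
      rw [← support_sum_monomial_coeff Q, map_sum]
      refine Submodule.sum_mem _ fun u hu => ?_
      have hcoef : (monomial u) (coeff u Q) = (coeff u Q) • (monomial u (1:k)) := by
        rw [smul_monomial, smul_eq_mul, mul_one]
      rw [hcoef, map_smul]
      refine Submodule.smul_mem _ _ (Submodule.subset_span ?_)
      refine Finset.mem_image.2 ⟨⇑u, ?_, ?_⟩
      · rw [Fintype.mem_piFinset]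
        intro i
        rw [Finset.mem_range, Nat.lt_succ_iff]
        calc u i ≤ u.sum fun _ e => e := finsupp_apply_le_sum u i
        _ ≤ Q.totalDegree := le_totalDegree hu
        _ ≤ D*m*N := by rw [hQ] at hdeg ⊢; exact hdeg
      · rw [Finsupp.equivFunOnFinite_symm_coe]
    have hmono : LinearIndependent k (fun u : Fin m →₀ ℕ => aeval f (monomial u (1:k))) := by
      have hb := (basisMonomials (Fin m) k).linearIndependent
      have hinj := algebraicIndependent_iff_injective_aeval.1 hf
      have h2 := hb.map' (aeval f).toLinearMap (LinearMap.ker_eq_bot.2 hinj)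
      have h3 : (fun u : Fin m →₀ ℕ => aeval f (monomial u (1:k))) =
          (⇑(aeval f).toLinearMap ∘ ⇑(basisMonomials (Fin m) k)) := by
        ext u
        simp [coe_basisMonomials]
      rw [h3]
      exact h2
    set S := Fintype.piFinset fun _ : Fin m => Finset.range (N+1) with hS
    have hli : LinearIndependent k (fun d : {x // x ∈ S} =>
        aeval f (monomial (Finsupp.equivFunOnFinite.symm d.1) (1:k))) :=
      hmono.comp (fun d : {x // x ∈ S} => Finsupp.equivFunOnFinite.symm d.1)
        ((Equiv.injective _).comp Subtype.val_injective)
    have hcard := linearIndependent_le_span' _ hli (T : Set R) (by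
      rintro x ⟨d, rfl⟩
      exact hspan d.1 fun i =>
        Nat.lt_succ_iff.1 (Finset.mem_range.1 (Fintype.mem_piFinset.1 d.2 i)))
    have hcard2 : ((N+1)^m : ℕ) ≤ Fintype.card (T : Set R) := by
      have := hcard
      rw [Cardinal.mk_fintype] at this
      have h4 : Fintype.card {x // x ∈ S} = (N+1)^m := by
        simp [hS, Fintype.card_coe, Fintype.card_piFinset]
      rw [h4] at this
      exact_mod_cast this
    calc ((N+1)^m : ℕ) ≤ Fintype.card (T : Set R) := hcard2
    _ = T.card := Fintype.card_coe T
    _ ≤ (D*m*N+1)^n := by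
        refine (Finset.card_image_le).trans ?_
        simp [Fintype.card_piFinset]
  by_contra hmn
  push_neg at hmn
  set C := D*m+1 with hC
  have hN : ∀ N : ℕ, N+1 ≤ C^n := by
    intro N
    have h := key N
    have h2 : (D*m*N+1)^n ≤ (C*(N+1))^n := by
      refine Nat.pow_le_pow_left ?_ n
      nlinarith [Nat.zero_le (D*m)]
    have h3 : (N+1)^m ≤ C^n * (N+1)^n := by
      rw [mul_pow] at h2
      exact le_trans h h2
    have h4 : (N+1)^(n+1) ≤ (N+1)^m := Nat.pow_le_pow_right (Nat.succ_le_succ (Nat.zero_le N)) hmn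
    have h5 : (N+1)^n * (N+1) ≤ (N+1)^n * C^n := by
      rw [← pow_succ]
      rw [mul_comm] at h3
      exact le_trans h4 h3
    exact Nat.le_of_mul_le_mul_left h5 (Nat.pow_pos (Nat.succ_pos N))
  have := hN (C^n)
  omega

lemma chain_exists_indep {k : Type*} [Field k] {R : Type*} [CommRing R] [Algebra k R] :
    ∀ (m : ℕ) (c : LTSeries (PrimeSpectrum R)), c.length = m →
      ∃ g : Fin m → R ⧸ c.head.asIdeal, AlgebraicIndependent k g := by
  intro m
  induction m with
  | zero =>
    intro c _
    haveI := c.head.2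
    refine ⟨fun i => i.elim0, algebraicIndependent_empty_type_iff.2 ?_⟩
    exact (algebraMap k _).injective
  | succ m ih =>
    intro c hc
    have hlen : c.length ≠ 0 := by omega
    obtain ⟨g, hg⟩ := ih (c.tail hlen) (by rw [RelSeries.tail_length]; omega)
    haveI := c.head.2
    haveI := (c.tail hlen).head.2
    have hlt : c.head.asIdeal < (c.tail hlen).head.asIdeal := by
      rw [RelSeries.head_tail]
      have h := c.step ⟨0, Nat.pos_of_ne_zero hlen⟩
      have e2 : (⟨0, Nat.pos_of_ne_zero hlen⟩ : Fin c.length).succ = (1 : Fin (c.length+1)) := by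
        ext
        simp [Fin.val_one, Nat.mod_eq_of_lt (by omega : 1 < c.length + 1)]
      rw [e2] at h
      exact h
    obtain ⟨g2, hg2⟩ := step_lemma (k := k) hlt g hg
    exact ⟨g2, hg2⟩

lemma ltSeries_length_le_nvars {k : Type*} [Field k] {n : ℕ}
    (c : LTSeries (PrimeSpectrum (MvPolynomial (Fin n) k))) : c.length ≤ n := by
  obtain ⟨g, hg⟩ := chain_exists_indep (k := k) c.length c rfl
  haveI := c.head.2
  refine trdeg_le_of_generators (k := k)
    (fun i => Ideal.Quotient.mkₐ k c.head.asIdeal (X i)) ?_ g hg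
  intro r
  have htop : Algebra.adjoin k
      (Set.range fun i => Ideal.Quotient.mkₐ k c.head.asIdeal (X i)) = ⊤ := by
    have h1 : (Set.range fun i : Fin n => Ideal.Quotient.mkₐ k c.head.asIdeal (X i))
        = ⇑(Ideal.Quotient.mkₐ k c.head.asIdeal) '' Set.range X := by
      rw [← Set.range_comp]; rfl
    rw [h1, ← AlgHom.map_adjoin, MvPolynomial.adjoin_range_X, Algebra.map_top,
      AlgHom.range_eq_top]
    exact Ideal.Quotient.mkₐ_surjective k _
  rw [htop]; exact Algebra.mem_top





/-- the paper's Corollary 3.3: if the edge ideal of a graph with at least one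
edge satisfies `I(G) = fB + A` with `A`, `B` proper homogeneous ideals, `f` homogeneous of
positive degree, and `ht(A) + 1 = ht(I(G))`, then `deg f = 1`. -/
theorem stmt5 {k : Type*} [Field k] {n : ℕ} (G : SimpleGraph (Fin n))
    (hG : ∃ i j, G.Adj i j)
    (A B : Ideal (MvPolynomial (Fin n) k))
    (hAhom : IsHomogeneousIdeal A) (hBhom : IsHomogeneousIdeal B)
    (hAproper : A ≠ ⊤) (hBproper : B ≠ ⊤)
    (f : MvPolynomial (Fin n) k) (df : ℕ) (hdf : 0 < df) (hfhom : f.IsHomogeneous df)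
    (hf0 : f ≠ 0)
    (hlink : edgeIdeal k G = Ideal.span {f} * B + A)
    (hht : Ideal.ht A + 1 = Ideal.ht (edgeIdeal k G)) :
    df = 1 := by

  by_contra hne
  have hdf2 : 2 ≤ df := by omega
  -- Step 1: every edge generator lies in A, so edgeIdeal = A
  have hedge : edgeIdeal k G ≤ A := by
    rw [edgeIdeal, Ideal.span_le]
    rintro p ⟨i, j, hij, rfl⟩
    have hmem : X i * X j ∈ Ideal.span {f} * B + A := by
      rw [← hlink]
      exact Ideal.subset_span ⟨i, j, hij, rfl⟩
    obtain ⟨u, hu, a, ha, hsum⟩ := Submodule.mem_sup.1 hmem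
    obtain ⟨b, hbB, hfb⟩ := Ideal.mem_span_singleton_mul.1 hu
    have hb20 : homogeneousComponent 2 (f * b) = 0 := by
      conv_lhs => rw [← sum_homogeneousComponent b, Finset.mul_sum, map_sum]
      refine Finset.sum_eq_zero fun e _ => ?_
      have hhom : (f * homogeneousComponent e b).IsHomogeneous (df + e) :=
        hfhom.mul (homogeneousComponent_isHomogeneous e b)
      rw [homogeneousComponent_of_mem ((mem_homogeneousSubmodule _ _).2 hhom)]
      split_ifs with h2
      · have he0 : e = 0 := by omega
        subst he0
        rw [homogeneousComponent_zero]
        have hcb : coeff 0 b = 0 := by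
          by_contra hc0
          have hunit : IsUnit (C (coeff 0 b) : MvPolynomial (Fin n) k) :=
            (isUnit_iff_ne_zero.2 hc0).map (C : k →+* MvPolynomial (Fin n) k)
          have hCb : (C (coeff 0 b) : MvPolynomial (Fin n) k) ∈ B := by
            have h3 := hBhom b hbB 0
            rwa [homogeneousComponent_zero] at h3
          exact hBproper (Ideal.eq_top_of_isUnit_mem _ hCb hunit)
        rw [hcb, map_zero, mul_zero]
      · rfl
    have hXij : homogeneousComponent 2 (X i * X j : MvPolynomial (Fin n) k)
        = X i * X j := by
      have hhom2 : (X i * X j : MvPolynomial (Fin n) k).IsHomogeneous 2 := by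
        have := (isHomogeneous_X k i).mul (isHomogeneous_X k j)
        exact this
      rw [homogeneousComponent_of_mem ((mem_homogeneousSubmodule _ _).2 hhom2),
        if_pos rfl]
    have hXA : (X i * X j : MvPolynomial (Fin n) k) ∈ A := by
      have h4 := congrArg (homogeneousComponent 2) hsum
      rw [← hfb] at h4
      rw [map_add, hb20, zero_add, hXij] at h4
      rw [← h4]
      exact hAhom a ha 2
    exact hXA
  have hAeq : A = edgeIdeal k G := by
    refine le_antisymm ?_ hedge
    rw [hlink]
    exact le_sup_right
  rw [hAeq] at hht
  -- Step 2: hence ht (edgeIdeal) = ⊤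
  have htop : Ideal.ht (edgeIdeal k G) = ⊤ := by
    by_contra hx
    lift Ideal.ht (edgeIdeal k G) to ℕ using hx with N hN
    have : (N : ℕ∞) + 1 = N := hht
    have h5 : N + 1 = N := by exact_mod_cast this
    omega
  -- Step 3: but edgeIdeal is contained in a prime of height ≤ n
  have hP : edgeIdeal k G ≤ RingHom.ker (eval (fun _ => (0:k)) :
      MvPolynomial (Fin n) k →+* k) := by
    rw [edgeIdeal, Ideal.span_le]
    rintro p ⟨i, j, hij, rfl⟩
    simp [RingHom.mem_ker]
  set P : PrimeSpectrum (MvPolynomial (Fin n) k) :=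
    ⟨RingHom.ker (eval (fun _ => (0:k)) : MvPolynomial (Fin n) k →+* k),
      RingHom.ker_isPrime _⟩ with hPdef
  have hle : Ideal.ht (edgeIdeal k G) ≤ Order.height P := by
    exact iInf_le (fun Q : {Q : PrimeSpectrum (MvPolynomial (Fin n) k) //
      edgeIdeal k G ≤ Q.asIdeal} => Order.height Q.1) ⟨P, hP⟩
  have hfin : Ideal.ht (edgeIdeal k G) ≤ (n : ℕ∞) :=
    hle.trans (Order.height_le fun c hc => Nat.cast_le.2 (ltSeries_length_le_nvars c))
  rw [htop] at hfin
  exact absurd (top_le_iff.1 hfin) (by simp)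
end

section
/- Let N, I, J be ideals of S with N ⊆ I ∩ J, and let φ : J/N → I/N be an isomorphism of S/N-modules (where J/N and I/N are viewed as S/N-submodules of S/N). Let a ∈ J be such that a is a nonzerodivisor on S/N. If φ(a + N) = ra + N for some r ∈ S, then I = rJ + N. -/
open MvPolynomial

set_option synthInstance.maxHeartbeats 1000000 in
set_option maxHeartbeats 1000000 in
/-- claim (2) of the paper's Proposition 5.2: if `φ : J/N → I/N` is an
`S/N`-module isomorphism, `a ∈ J` is a nonzerodivisor on `S/N`, and `φ(a + N) = ra + N`,
then `I = rJ + N`. -/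
theorem stmt12 {k : Type*} [Field k] {n : ℕ}
    (N I J : Ideal (MvPolynomial (Fin n) k)) (hNI : N ≤ I) (hNJ : N ≤ J)
    (φ : (J.map (Ideal.Quotient.mk N)) ≃ₗ[MvPolynomial (Fin n) k ⧸ N]
         (I.map (Ideal.Quotient.mk N)))
    (a : MvPolynomial (Fin n) k) (ha : a ∈ J)
    (hreg : ∀ y : MvPolynomial (Fin n) k ⧸ N, Ideal.Quotient.mk N a * y = 0 → y = 0)
    (r : MvPolynomial (Fin n) k)
    (hφa : (φ ⟨Ideal.Quotient.mk N a, Ideal.mem_map_of_mem _ ha⟩ :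
        MvPolynomial (Fin n) k ⧸ N) = Ideal.Quotient.mk N (r * a)) :
    I = Ideal.span {r} * J + N := by
  have hker : ∀ z, (Ideal.Quotient.mk N) z = 0 → z ∈ N := fun z hz => Ideal.Quotient.eq_zero_iff_mem.mp hz
  have key : ∀ x, ∀ hx : x ∈ J,
      (φ ⟨(Ideal.Quotient.mk N) x, Ideal.mem_map_of_mem _ hx⟩ : MvPolynomial (Fin n) k ⧸ N) = (Ideal.Quotient.mk N) (r * x) := by
    intro x hx
    have h1 : (Ideal.Quotient.mk N) a • φ ⟨(Ideal.Quotient.mk N) x, Ideal.mem_map_of_mem _ hx⟩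
        = (Ideal.Quotient.mk N) x • φ ⟨(Ideal.Quotient.mk N) a, Ideal.mem_map_of_mem _ ha⟩ := by
      rw [← map_smul, ← map_smul]
      congr 1
      ext
      show (Ideal.Quotient.mk N) a * (Ideal.Quotient.mk N) x = (Ideal.Quotient.mk N) x * (Ideal.Quotient.mk N) a
      ring
    have h2 : (Ideal.Quotient.mk N) a * (φ ⟨(Ideal.Quotient.mk N) x, Ideal.mem_map_of_mem _ hx⟩ : MvPolynomial (Fin n) k ⧸ N)
        = (Ideal.Quotient.mk N) x * (Ideal.Quotient.mk N) (r * a) := by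
      have h1' := Subtype.ext_iff.mp h1
      simpa only [Submodule.coe_smul, smul_eq_mul, hφa] using h1'
    have h3 : (Ideal.Quotient.mk N) a * ((φ ⟨(Ideal.Quotient.mk N) x, Ideal.mem_map_of_mem _ hx⟩ : MvPolynomial (Fin n) k ⧸ N)
        - (Ideal.Quotient.mk N) (r * x)) = 0 := by
      rw [mul_sub, h2, ← map_mul, ← map_mul, sub_eq_zero]
      congr 1
      ring
    exact sub_eq_zero.mp (hreg _ h3)
  apply le_antisymm
  · intro z hz
    obtain ⟨v, hv⟩ := φ.surjective ⟨(Ideal.Quotient.mk N) z, Ideal.mem_map_of_mem _ hz⟩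
    obtain ⟨x, hx, hxv⟩ := Ideal.mem_map_iff_of_surjective (Ideal.Quotient.mk N) Ideal.Quotient.mk_surjective |>.mp v.2
    have hv' : v = ⟨(Ideal.Quotient.mk N) x, Ideal.mem_map_of_mem _ hx⟩ := Subtype.ext hxv.symm
    have hz2 : (Ideal.Quotient.mk N) z = (Ideal.Quotient.mk N) (r * x) := by
      have h4 := Subtype.ext_iff.mp hv
      rw [hv', key x hx] at h4
      exact h4.symm
    have hzn : z - r * x ∈ N := by
      apply hker
      rw [map_sub, hz2, sub_self]
    have hrw : z = r * x + (z - r * x) := by ring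
    rw [hrw]
    exact Submodule.add_mem_sup (Ideal.mul_mem_mul (Ideal.mem_span_singleton_self r) hx) hzn
  · apply sup_le _ hNI
    rw [Ideal.span_singleton_mul_le_iff]
    intro x hx
    have hmem : (Ideal.Quotient.mk N) (r * x) ∈ I.map (Ideal.Quotient.mk N) := by
      rw [← key x hx]
      exact (φ ⟨(Ideal.Quotient.mk N) x, Ideal.mem_map_of_mem _ hx⟩).2
    obtain ⟨z, hz, hzx⟩ := Ideal.mem_map_iff_of_surjective (Ideal.Quotient.mk N) Ideal.Quotient.mk_surjective |>.mp hmem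
    have hn : r * x - z ∈ N := by
      apply hker
      rw [map_sub, hzx, sub_self]
    have hrw : r * x = z + (r * x - z) := by ring
    rw [hrw]
    exact Ideal.add_mem I hz (hNI hn)
end

section
/- Let N, I, J be monomial ideals of S with N ⊆ I ∩ J, and let φ : J/N → I/N be an isomorphism of S/N-modules (where J/N and I/N are viewed as S/N-submodules of S/N). Suppose a ∈ J is a monomial that is a nonzerodivisor on S/N, and let x ∈ I be any element with x + N = φ(a + N). Then L := aI + N is a monomial ideal of S, L = xJ + N, and both N : (a) = N and N : (x) = N. -/
open MvPolynomial

set_option maxHeartbeats 2000000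
set_option synthInstance.maxHeartbeats 1000000

/-- claim (1) of the paper's Proposition 5.2: if `N`, `I`, `J` are monomial
ideals, `φ : J/N → I/N` is an `S/N`-module isomorphism, `a ∈ J` is a monomial that is a
nonzerodivisor on `S/N`, and `x ∈ I` satisfies `x + N = φ(a + N)`, then `L = aI + N` is a
monomial ideal, `L = xJ + N`, and `N : (a) = N` and `N : (x) = N`. -/
theorem stmt16 {k : Type*} [Field k] {n : ℕ}
    (N I J : Ideal (MvPolynomial (Fin n) k)) (hNI : N ≤ I) (hNJ : N ≤ J)
    (hNmon : IsMonomialIdeal N) (hImon : IsMonomialIdeal I) (hJmon : IsMonomialIdeal J)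
    (φ : (J.map (Ideal.Quotient.mk N)) ≃ₗ[MvPolynomial (Fin n) k ⧸ N]
         (I.map (Ideal.Quotient.mk N)))
    (a : MvPolynomial (Fin n) k) (ha : a ∈ J)
    (d : Fin n →₀ ℕ) (hamon : a = monomial d (1 : k))
    (hreg : ∀ y : MvPolynomial (Fin n) k ⧸ N, Ideal.Quotient.mk N a * y = 0 → y = 0)
    (x : MvPolynomial (Fin n) k) (hx : x ∈ I)
    (hφa : Ideal.Quotient.mk N x =
      (φ ⟨Ideal.Quotient.mk N a, Ideal.mem_map_of_mem _ ha⟩ : MvPolynomial (Fin n) k ⧸ N)) :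
    IsMonomialIdeal (Ideal.span {a} * I + N) ∧
    Ideal.span {a} * I + N = Ideal.span {x} * J + N ∧
    N.colon (Ideal.span {a}) = N ∧ N.colon (Ideal.span {x}) = N := by
  classical
  have hcolon_a : N.colon (Ideal.span {a}) = N := by
    ext r
    rw [Ideal.mem_colon_span_singleton]
    constructor
    · intro h
      have h0 : Ideal.Quotient.mk N a * Ideal.Quotient.mk N r = 0 := by
        rw [← map_mul, Ideal.Quotient.eq_zero_iff_mem, mul_comm]
        exact h
      have := hreg (Ideal.Quotient.mk N r) h0
      rwa [Ideal.Quotient.eq_zero_iff_mem] at this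
    · intro h
      exact N.mul_mem_right a h
  have hregx : ∀ s : MvPolynomial (Fin n) k, x * s ∈ N → s ∈ N := by
    intro s hs
    have h0 : Ideal.Quotient.mk N s * Ideal.Quotient.mk N x = 0 := by
      rw [← map_mul, Ideal.Quotient.eq_zero_iff_mem, mul_comm]
      exact hs
    have hval : ((Ideal.Quotient.mk N s • φ ⟨Ideal.Quotient.mk N a,
        Ideal.mem_map_of_mem _ ha⟩ : I.map (Ideal.Quotient.mk N)) :
        MvPolynomial (Fin n) k ⧸ N) = 0 := by
      rw [SetLike.val_smul, smul_eq_mul, ← hφa]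
      exact h0
    have hz : (Ideal.Quotient.mk N s • φ ⟨Ideal.Quotient.mk N a,
        Ideal.mem_map_of_mem _ ha⟩ : I.map (Ideal.Quotient.mk N)) = 0 :=
      Subtype.ext hval
    rw [← map_smul, ← map_zero φ] at hz
    have hz2 : (Ideal.Quotient.mk N s • (⟨Ideal.Quotient.mk N a,
        Ideal.mem_map_of_mem _ ha⟩ : J.map (Ideal.Quotient.mk N))) = 0 :=
      φ.injective hz
    have hval2 : Ideal.Quotient.mk N s * Ideal.Quotient.mk N a = 0 := by
      have := congrArg (fun z : J.map (Ideal.Quotient.mk N) =>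
        (z : MvPolynomial (Fin n) k ⧸ N)) hz2
      simpa [smul_eq_mul] using this
    have := hreg (Ideal.Quotient.mk N s) (by rw [mul_comm]; exact hval2)
    rwa [Ideal.Quotient.eq_zero_iff_mem] at this
  have hcolon_x : N.colon (Ideal.span {x}) = N := by
    ext r
    rw [Ideal.mem_colon_span_singleton]
    constructor
    · intro h
      exact hregx r (by rwa [mul_comm] at h)
    · intro h
      exact N.mul_mem_right x h
  have key1 : ∀ i ∈ I, ∃ j ∈ J,
      Ideal.Quotient.mk N (a * i) = Ideal.Quotient.mk N (x * j) := by
    intro i hi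
    obtain ⟨j, hj, hjw⟩ := Ideal.mem_map_iff_of_surjective (Ideal.Quotient.mk N)
      Ideal.Quotient.mk_surjective |>.mp
      (φ.symm ⟨Ideal.Quotient.mk N i, Ideal.mem_map_of_mem _ hi⟩).2
    refine ⟨j, hj, ?_⟩
    have hφw : φ (φ.symm ⟨Ideal.Quotient.mk N i, Ideal.mem_map_of_mem _ hi⟩)
        = ⟨Ideal.Quotient.mk N i, Ideal.mem_map_of_mem _ hi⟩ := φ.apply_symm_apply _
    have hsmul : (Ideal.Quotient.mk N a •
          φ.symm ⟨Ideal.Quotient.mk N i, Ideal.mem_map_of_mem _ hi⟩ :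
          J.map (Ideal.Quotient.mk N))
        = Ideal.Quotient.mk N j • (⟨Ideal.Quotient.mk N a,
          Ideal.mem_map_of_mem _ ha⟩ : J.map (Ideal.Quotient.mk N)) := by
      apply Subtype.ext
      simp only [SetLike.val_smul, smul_eq_mul, hjw]
      ring
    calc Ideal.Quotient.mk N (a * i)
        = ((Ideal.Quotient.mk N a •
            φ (φ.symm ⟨Ideal.Quotient.mk N i, Ideal.mem_map_of_mem _ hi⟩) :
            I.map (Ideal.Quotient.mk N)) : MvPolynomial (Fin n) k ⧸ N) := by
          rw [hφw]
          simp [smul_eq_mul, map_mul]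
      _ = ((φ (Ideal.Quotient.mk N a •
            φ.symm ⟨Ideal.Quotient.mk N i, Ideal.mem_map_of_mem _ hi⟩) :
            I.map (Ideal.Quotient.mk N)) : MvPolynomial (Fin n) k ⧸ N) := by
          rw [map_smul]
      _ = ((Ideal.Quotient.mk N j • φ ⟨Ideal.Quotient.mk N a,
            Ideal.mem_map_of_mem _ ha⟩ :
            I.map (Ideal.Quotient.mk N)) : MvPolynomial (Fin n) k ⧸ N) := by
          rw [hsmul, map_smul]
      _ = Ideal.Quotient.mk N (x * j) := by
          simp only [SetLike.val_smul, smul_eq_mul, ← hφa, map_mul]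
          ring
  have key2 : ∀ j ∈ J, ∃ i ∈ I,
      Ideal.Quotient.mk N (x * j) = Ideal.Quotient.mk N (a * i) := by
    intro j hj
    obtain ⟨i, hi, hiu⟩ := Ideal.mem_map_iff_of_surjective (Ideal.Quotient.mk N)
      Ideal.Quotient.mk_surjective |>.mp
      (φ ⟨Ideal.Quotient.mk N j, Ideal.mem_map_of_mem _ hj⟩).2
    refine ⟨i, hi, ?_⟩
    have hsmul : (Ideal.Quotient.mk N j • (⟨Ideal.Quotient.mk N a,
          Ideal.mem_map_of_mem _ ha⟩ : J.map (Ideal.Quotient.mk N)))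
        = Ideal.Quotient.mk N a • (⟨Ideal.Quotient.mk N j,
          Ideal.mem_map_of_mem _ hj⟩ : J.map (Ideal.Quotient.mk N)) := by
      apply Subtype.ext
      simp only [SetLike.val_smul, smul_eq_mul]
      ring
    calc Ideal.Quotient.mk N (x * j)
        = ((Ideal.Quotient.mk N j • φ ⟨Ideal.Quotient.mk N a,
            Ideal.mem_map_of_mem _ ha⟩ :
            I.map (Ideal.Quotient.mk N)) : MvPolynomial (Fin n) k ⧸ N) := by
          simp only [SetLike.val_smul, smul_eq_mul, ← hφa, map_mul]
          ring
      _ = ((φ (Ideal.Quotient.mk N j • ⟨Ideal.Quotient.mk N a,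
            Ideal.mem_map_of_mem _ ha⟩) :
            I.map (Ideal.Quotient.mk N)) : MvPolynomial (Fin n) k ⧸ N) := by
          rw [map_smul]
      _ = ((Ideal.Quotient.mk N a • φ ⟨Ideal.Quotient.mk N j,
            Ideal.mem_map_of_mem _ hj⟩ :
            I.map (Ideal.Quotient.mk N)) : MvPolynomial (Fin n) k ⧸ N) := by
          rw [hsmul, map_smul]
      _ = Ideal.Quotient.mk N (a * i) := by
          simp only [SetLike.val_smul, smul_eq_mul, hiu, map_mul]
  have heq : Ideal.span {a} * I + N = Ideal.span {x} * J + N := by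
    apply le_antisymm
    · apply sup_le
      · rw [Ideal.span_singleton_mul_le_iff]
        intro i hi
        obtain ⟨j, hj, hij⟩ := key1 i hi
        have hmem : a * i - x * j ∈ N := Ideal.Quotient.eq.mp hij
        have hrw : a * i = x * j + (a * i - x * j) := by ring
        rw [hrw]
        exact add_mem (Ideal.mem_sup_left (Ideal.mul_mem_mul
          (Ideal.mem_span_singleton_self x) hj)) (Ideal.mem_sup_right hmem)
      · exact le_sup_right
    · apply sup_le
      · rw [Ideal.span_singleton_mul_le_iff]
        intro j hj
        obtain ⟨i, hi, hij⟩ := key2 j hj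
        have hmem : x * j - a * i ∈ N := Ideal.Quotient.eq.mp hij
        have hrw : x * j = a * i + (x * j - a * i) := by ring
        rw [hrw]
        exact add_mem (Ideal.mem_sup_left (Ideal.mul_mem_mul
          (Ideal.mem_span_singleton_self a) hi)) (Ideal.mem_sup_right hmem)
      · exact le_sup_right
  have hmonL : IsMonomialIdeal (Ideal.span {a} * I + N) := by
    obtain ⟨sI, hsI⟩ := hImon
    obtain ⟨sN, hsN⟩ := hNmon
    refine ⟨(fun e => d + e) '' sI ∪ sN, ?_⟩
    rw [Set.image_union, Ideal.span_union, hsI, hsN, hamon, Ideal.span_mul_span',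
      Set.singleton_mul, Set.image_image, Set.image_image]
    have hfun : (fun e => monomial d (1:k) * monomial e (1:k))
        = fun e => monomial (d + e) (1:k) := by
      funext e
      rw [monomial_mul, one_mul]
    rw [hfun]
    exact Submodule.add_eq_sup _ _
  exact ⟨hmonL, heq, hcolon_a, hcolon_x⟩
end
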